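/- arXiv:2410.23878 — 7 statements merged into one kernel-verified Lean document; each statement's English description precedes it below -/
import Mathlib

section
/- Let G be a graph, let k ≥ 0, and let u be a vertex of G. Suppose there exist disjoint vertex sets A, B ⊆ V(G) \ {u}, each inducing a complete subgraph of G, and five distinct vertices v₁,…,v₅ ∉ A ∪ B ∪ {u}, such that each of u, v₁,…,v₅ has all its neighbors inside A ∪ B, the vertices u, v₁,…,v₅ are pairwise non-adjacent, and N(u) ⊆ N(vᵢ) for each i. Then G has a feedback vertex set of size at most k if and only if G − u has a feedback vertex set of size at most k. -/
open SimpleGraph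

/-- `X` is a feedback vertex set of `G`: deleting `X` leaves an acyclic graph. -/
def IsFVS {V : Type*} [Fintype V] (G : SimpleGraph V) (X : Finset V) : Prop :=
  (G.induce ((↑X : Set V)ᶜ)).IsAcyclic

/-- `G` has a feedback vertex set of size at most `k`. -/
def HasFVS {V : Type*} [Fintype V] (G : SimpleGraph V) (k : ℕ) : Prop :=
  ∃ X : Finset V, X.card ≤ k ∧ IsFVS G X

/-- The graph `G - u`, obtained by deleting the vertex `u`. -/
def delVert {V : Type*} (G : SimpleGraph V) (u : V) : SimpleGraph {x : V // x ≠ u} :=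
  G.comap Subtype.val

lemma edge_getVert_mem {V : Type*} {G : SimpleGraph V} :
    ∀ {x y : V} (p : G.Walk x y) {i : ℕ}, i < p.length →
      s(p.getVert i, p.getVert (i+1)) ∈ p.edges := by
  intro x y p
  induction p with
  | nil => intro i hi; simp at hi
  | cons h q ih =>
    intro i hi
    cases i with
    | zero => simp [Walk.getVert_cons_succ, Walk.getVert_zero]
    | succ n =>
      simp only [Walk.getVert_cons_succ, Walk.edges_cons, List.mem_cons]
      exact Or.inr (ih (by simpa using hi))

lemma cycle_two_nbrs {V : Type*} {G : SimpleGraph V} {x : V} {c : G.Walk x x}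
    (hc : c.IsCycle) : ∃ y z : V, y ≠ z ∧ G.Adj x y ∧ G.Adj x z := by
  have hlen3 := hc.three_le_length
  cases c with
  | nil => exact absurd rfl hc.ne_nil
  | cons h p =>
    rename_i w
    have hlen : 2 ≤ p.length := by simp at hlen3; omega
    rw [Walk.cons_isCycle_iff] at hc
    obtain ⟨hp, he⟩ := hc
    have hlast : s(p.getVert (p.length - 1), x) ∈ p.edges := by
      have := edge_getVert_mem p (i := p.length - 1) (by omega)
      have h2 : p.length - 1 + 1 = p.length := by omega
      rwa [h2, Walk.getVert_length] at this
    refine ⟨w, p.getVert (p.length - 1), ?_, h, ?_⟩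
    · intro hwz
      rw [← hwz] at hlast
      exact he (by rw [Sym2.eq_swap]; exact hlast)
    · have := p.adj_getVert_succ (i := p.length - 1) (by omega)
      have h2 : p.length - 1 + 1 = p.length := by omega
      rw [h2, Walk.getVert_length] at this
      exact this.symm

lemma comap_walk_lift {V β : Type*} {G : SimpleGraph V} {g : β → V} (hg : Function.Injective g) :
    ∀ {x y : V} (p : G.Walk x y) {a b : β} (ha : g a = x) (hb : g b = y),
      (∀ w ∈ p.support, w ∈ Set.range g) →
      ∃ q : (G.comap g).Walk a b, q.map (SimpleGraph.Hom.comap g G) = p.copy ha.symm hb.symm := by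
  intro x y p
  induction p with
  | nil =>
    intro a b ha hb _
    cases hg (ha.trans hb.symm)
    subst ha
    exact ⟨Walk.nil, by simp; rfl⟩
  | cons h q ih =>
    rename_i x' w' y'
    intro a b ha hb hsup
    obtain ⟨a1, ha1⟩ : w' ∈ Set.range g := hsup w' (by simp)
    obtain ⟨q', hq'⟩ := ih ha1 hb (fun w hw => hsup w (by simp [hw]))
    have hadj : (G.comap g).Adj a a1 := by
      simp only [comap_adj, ha, ha1]; exact h
    refine ⟨Walk.cons hadj q', ?_⟩
    subst ha ha1 hb
    simp [Walk.map_cons, hq']; rfl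

lemma no_cycle_lift {V β : Type*} {G : SimpleGraph V} {g : β → V} (hg : Function.Injective g)
    (hac : (G.comap g).IsAcyclic) {x : V} {c : G.Walk x x} (hc : c.IsCycle)
    (hsup : ∀ w ∈ c.support, w ∈ Set.range g) : False := by
  obtain ⟨a, ha⟩ : x ∈ Set.range g := hsup x c.start_mem_support
  obtain ⟨q, hq⟩ := comap_walk_lift hg c ha ha hsup
  have : q.IsCycle := by
    have hinj : Function.Injective (SimpleGraph.Hom.comap g G) := hg
    rw [← Walk.map_isCycle_iff_of_injective hinj, hq]
    exact (Walk.isCycle_copy _ _).mpr hc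
  exact hac q this

lemma triangle_isCycle {V : Type*} {G : SimpleGraph V} {x y z : V}
    (hxy : G.Adj x y) (hyz : G.Adj y z) (hzx : G.Adj z x) :
    (Walk.cons hxy (Walk.cons hyz (Walk.cons hzx Walk.nil))).IsCycle := by
  have h1 := G.ne_of_adj hxy
  have h2 := G.ne_of_adj hyz
  have h3 := G.ne_of_adj hzx
  simp [Walk.isCycle_def, Walk.isTrail_def, Sym2.eq_iff]
  aesop

lemma square_isCycle {V : Type*} {G : SimpleGraph V} {x y z w : V}
    (h1 : G.Adj x y) (h2 : G.Adj y z) (h3 : G.Adj z w) (h4 : G.Adj w x)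
    (hxz : x ≠ z) (hyw : y ≠ w) :
    (Walk.cons h1 (Walk.cons h2 (Walk.cons h3 (Walk.cons h4 Walk.nil)))).IsCycle := by
  have e1 := G.ne_of_adj h1
  have e2 := G.ne_of_adj h2
  have e3 := G.ne_of_adj h3
  have e4 := G.ne_of_adj h4
  simp [Walk.isCycle_def, Walk.isTrail_def, Sym2.eq_iff]
  aesop

/-- Safeness of rule (R0): with two disjoint cliques `A`, `B` and five pairwise
non-adjacent "twins" `v i` of `u`, the vertex `u` may be deleted. -/
theorem fvs_rule_R0 {V : Type*} [Fintype V] [DecidableEq V]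
    (G : SimpleGraph V) (k : ℕ) (u : V) (A B : Finset V) (v : Fin 5 → V)
    (hAB : Disjoint A B) (huA : u ∉ A) (huB : u ∉ B)
    (hAclique : G.IsClique (A : Set V)) (hBclique : G.IsClique (B : Set V))
    (hvinj : Function.Injective v)
    (hvA : ∀ i, v i ∉ A) (hvB : ∀ i, v i ∉ B) (hvu : ∀ i, v i ≠ u)
    (hNu : G.neighborSet u ⊆ ↑A ∪ ↑B)
    (hNv : ∀ i, G.neighborSet (v i) ⊆ ↑A ∪ ↑B)
    (huvnadj : ∀ i, ¬ G.Adj u (v i))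
    (hvvnadj : ∀ i j, ¬ G.Adj (v i) (v j))
    (hsub : ∀ i, G.neighborSet u ⊆ G.neighborSet (v i)) :
    HasFVS G k ↔ HasFVS (delVert G u) k := by
  classical
  constructor
  · rintro ⟨X, hXk, hXfvs⟩
    refine ⟨Finset.univ.filter (fun a : {x : V // x ≠ u} => (a : V) ∈ X), ?_, ?_⟩
    · refine le_trans (Finset.card_le_card_of_injOn (fun a => (a : V)) ?_ ?_) hXk
      · intro a ha; simpa using (Finset.mem_filter.mp ha).2
      · intro a _ b _ h; exact Subtype.ext h
    · intro x c hc
      -- map the cycle into G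
      let f : ((delVert G u).induce
          ((↑(Finset.univ.filter (fun a : {x : V // x ≠ u} => (a : V) ∈ X)) :
            Set {x : V // x ≠ u})ᶜ : Set {x : V // x ≠ u})) →g G :=
        (SimpleGraph.Hom.comap Subtype.val G).comp
          (SimpleGraph.Hom.comap Subtype.val (G.comap Subtype.val))
      have hfinj : Function.Injective f := by
        intro a b h
        exact Subtype.ext (Subtype.ext h)
      have hc' : (c.map f).IsCycle := hc.map hfinj
      refine no_cycle_lift (g := (Subtype.val : (((↑X : Set V)ᶜ : Set V)) → V))
        Subtype.val_injective hXfvs hc' ?_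
      intro w hw
      rw [Walk.support_map, List.mem_map] at hw
      obtain ⟨w0, hw0, rfl⟩ := hw
      have hmem2 : (w0 : {x : V // x ≠ u}) ∉
          Finset.univ.filter (fun a : {x : V // x ≠ u} => (a : V) ∈ X) :=
        fun h => w0.2 h
      have hX : ((w0 : {x : V // x ≠ u}) : V) ∉ X := by
        intro hmem; exact hmem2 (Finset.mem_filter.mpr ⟨Finset.mem_univ _, hmem⟩)
      exact ⟨⟨_, hX⟩, rfl⟩
  · rintro ⟨X', hX'k, hX'fvs⟩
    set X : Finset V := X'.image Subtype.val with hXdef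
    have hXcard : X.card = X'.card :=
      Finset.card_image_of_injective _ Subtype.val_injective
    have hmemX : ∀ (w : V) (hw : w ≠ u), (w ∈ X ↔ (⟨w, hw⟩ : {x : V // x ≠ u}) ∈ X') := by
      intro w hw
      simp only [hXdef, Finset.mem_image]
      constructor
      · rintro ⟨a, ha, rfl⟩
        obtain ⟨av, ap⟩ := a
        exact ha
      · intro h; exact ⟨_, h, rfl⟩
    -- master contradiction tool: no G-cycle avoiding X and u
    have hF : ∀ (x : V) (c : G.Walk x x), c.IsCycle →
        (∀ w ∈ c.support, w ∉ X ∧ w ≠ u) → False := by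
      intro x c hc hsup
      refine no_cycle_lift
        (g := fun (w : {a : {x : V // x ≠ u} // a ∈ ((↑X' : Set {x : V // x ≠ u})ᶜ)}) =>
          ((w : {x : V // x ≠ u}) : V)) ?_ hX'fvs hc ?_
      · intro a b h; exact Subtype.ext (Subtype.ext h)
      · intro w hw
        obtain ⟨hwX, hwu⟩ := hsup w hw
        refine ⟨⟨⟨w, hwu⟩, ?_⟩, rfl⟩
        intro hmem
        exact hwX ((hmemX w hwu).mpr hmem)
    -- cliques leave at most 2 vertices each
    have hclique2 : ∀ (C : Finset V), G.IsClique (C : Set V) → u ∉ C → (C \ X).card ≤ 2 := by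
      intro C hCclique huC
      by_contra hgt
      push_neg at hgt
      obtain ⟨T, hTsub, hTcard⟩ := Finset.exists_subset_card_eq (show 3 ≤ (C \ X).card from hgt)
      rw [Finset.card_eq_three] at hTcard
      obtain ⟨x1, x2, x3, h12, h13, h23, rfl⟩ := hTcard
      have m1 := hTsub (by simp : x1 ∈ ({x1, x2, x3} : Finset V))
      have m2 := hTsub (by simp : x2 ∈ ({x1, x2, x3} : Finset V))
      have m3 := hTsub (by simp : x3 ∈ ({x1, x2, x3} : Finset V))
      rw [Finset.mem_sdiff] at m1 m2 m3
      have a12 : G.Adj x1 x2 := hCclique (by simpa using m1.1) (by simpa using m2.1) h12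
      have a23 : G.Adj x2 x3 := hCclique (by simpa using m2.1) (by simpa using m3.1) h23
      have a31 : G.Adj x3 x1 := hCclique (by simpa using m3.1) (by simpa using m1.1) h13.symm
      refine hF x1 _ (triangle_isCycle a12 a23 a31) ?_
      intro w hw
      simp only [Walk.support_cons, Walk.support_nil, List.mem_cons, List.mem_singleton] at hw
      have hne : ∀ y ∈ C, y ≠ u := fun y hy => fun h => huC (h ▸ hy)
      rcases hw with rfl | rfl | rfl | rfl | h
      · exact ⟨m1.2, hne _ m1.1⟩
      · exact ⟨m2.2, hne _ m2.1⟩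
      · exact ⟨m3.2, hne _ m3.1⟩
      · exact ⟨m1.2, hne _ m1.1⟩
      · simp at h
    have hA2 : (A \ X).card ≤ 2 := hclique2 A hAclique huA
    have hB2 : (B \ X).card ≤ 2 := hclique2 B hBclique huB
    set S : Finset V := (A ∪ B) \ X with hSdef
    have hS4 : S.card ≤ 4 := by
      rw [hSdef, Finset.union_sdiff_distrib]
      calc ((A \ X) ∪ (B \ X)).card ≤ (A \ X).card + (B \ X).card := Finset.card_union_le _ _
        _ ≤ 4 := by omega
    by_cases hcase : ∃ a ∈ G.neighborSet u, ∃ b ∈ G.neighborSet u, a ≠ b ∧ a ∉ X ∧ b ∉ X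
    · -- the replacement case
      obtain ⟨a, hau, b, hbu, hab, haX, hbX⟩ := hcase
      have hau' : G.Adj u a := hau
      have hbu' : G.Adj u b := hbu
      have haAB : a ∈ A ∪ B := by
        have := hNu hau
        simpa using this
      have hbAB : b ∈ A ∪ B := by
        have := hNu hbu
        simpa using this
      have havne : ∀ i, v i ≠ a := by
        intro i h
        rcases Finset.mem_union.mp haAB with h' | h'
        · exact hvA i (h ▸ h')
        · exact hvB i (h ▸ h')
      have hbvne : ∀ i, v i ≠ b := by
        intro i h
        rcases Finset.mem_union.mp hbAB with h' | h'
        · exact hvA i (h ▸ h')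
        · exact hvB i (h ▸ h')
      have hane : a ≠ u := fun h => G.loopless.irrefl u (h ▸ hau')
      have hbne : b ≠ u := fun h => G.loopless.irrefl u (h ▸ hbu')
      -- at most one twin avoids X
      have htwin : ∀ i j : Fin 5, v i ∉ X → v j ∉ X → i = j := by
        intro i j hi hj
        by_contra hij
        have hvia : G.Adj (v i) a := hsub i hau
        have hvib : G.Adj (v i) b := hsub i hbu
        have hvja : G.Adj (v j) a := hsub j hau
        have hvjb : G.Adj (v j) b := hsub j hbu
        have hvij : v i ≠ v j := fun h => hij (hvinj h)
        refine hF (v i) _ (square_isCycle hvia hvja.symm hvjb hvib.symm hvij hab) ?_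
        intro w hw
        simp only [Walk.support_cons, Walk.support_nil, List.mem_cons, List.mem_singleton] at hw
        rcases hw with rfl | rfl | rfl | rfl | rfl | h
        · exact ⟨hi, hvu i⟩
        · exact ⟨haX, hane⟩
        · exact ⟨hj, hvu j⟩
        · exact ⟨hbX, hbne⟩
        · exact ⟨hi, hvu i⟩
        · simp at h
      set V5 : Finset V := Finset.univ.image v with hV5def
      have hV5card : V5.card = 5 := by
        rw [hV5def, Finset.card_image_of_injective _ hvinj]
        simp
      have hV5X : (V5 \ X).card ≤ 1 := by
        rw [Finset.card_le_one]
        intro x hx y hy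
        rw [Finset.mem_sdiff, hV5def, Finset.mem_image] at hx hy
        obtain ⟨⟨i, _, rfl⟩, hxX⟩ := hx
        obtain ⟨⟨j, _, rfl⟩, hyX⟩ := hy
        rw [htwin i j hxX hyX]
      have haS : a ∈ S := by
        rw [hSdef, Finset.mem_sdiff]; exact ⟨haAB, haX⟩
      set Y : Finset V := (X \ V5) ∪ (S \ {a}) ∪ {u} with hYdef
      have hYcard : Y.card ≤ k := by
        have e1 : (X \ V5).card + (X ∩ V5).card = X.card := Finset.card_sdiff_add_card_inter _ _
        have e2 : (V5 \ X).card + (V5 ∩ X).card = V5.card := Finset.card_sdiff_add_card_inter _ _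
        have e3 : (X ∩ V5).card = (V5 ∩ X).card := by rw [Finset.inter_comm]
        have e4 : (S \ {a}).card = S.card - 1 := by
          rw [Finset.card_sdiff_of_subset (by simpa using haS)]
          simp
        have e5 : 1 ≤ S.card := Finset.card_pos.mpr ⟨a, haS⟩
        have e6 : Y.card ≤ (X \ V5).card + (S \ {a}).card + 1 := by
          calc Y.card ≤ ((X \ V5) ∪ (S \ {a})).card + ({u} : Finset V).card :=
                Finset.card_union_le _ _
            _ ≤ (X \ V5).card + (S \ {a}).card + 1 := by
                have := Finset.card_union_le (X \ V5) (S \ {a})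
                simp only [Finset.card_singleton]
                omega
        have e7 : X.card ≤ k := hXcard ▸ hX'k
        omega
      refine ⟨Y, hYcard, ?_⟩
      intro x c hc
      -- twins are not on the cycle
      have hnotwin : ∀ (w0 : ((↑Y : Set V)ᶜ : Set V)), w0 ∈ c.support → ∀ m, (w0 : V) ≠ v m := by
        intro w0 hw0 m hwm
        have hc' := (hc.rotate hw0)
        obtain ⟨y, z, hyz, hy, hz⟩ := cycle_two_nbrs hc'
        -- y z : vertices of the induced graph, adjacent to v m in G
        have hyadj : G.Adj (v m) (y : V) := by
          have := hy
          simp only [comap_adj, Function.Embedding.coe_subtype] at this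
          rwa [hwm] at this
        have hzadj : G.Adj (v m) (z : V) := by
          have := hz
          simp only [comap_adj, Function.Embedding.coe_subtype] at this
          rwa [hwm] at this
        have hya : (y : V) = a := by
          have hyAB : (y : V) ∈ A ∪ B := by
            have := hNv m hyadj
            simpa using this
          have hyY : (y : V) ∉ X \ V5 ∪ S \ {a} ∪ {u} := fun h => y.2 h
          simp only [Finset.mem_union, Finset.mem_sdiff, Finset.mem_singleton, not_or] at hyY
          obtain ⟨⟨hy1, hy2⟩, _⟩ := hyY
          have hyV5 : (y : V) ∉ V5 := by
            rw [hV5def, Finset.mem_image]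
            rintro ⟨i, _, hvi⟩
            rw [← hvi] at hyAB
            rcases Finset.mem_union.mp hyAB with h' | h'
            · exact hvA i h'
            · exact hvB i h'
          have hyX : (y : V) ∉ X := fun h => hy1 ⟨h, hyV5⟩
          have hyS : (y : V) ∈ S := by rw [hSdef, Finset.mem_sdiff]; exact ⟨hyAB, hyX⟩
          by_contra hne
          exact hy2 ⟨hyS, hne⟩
        have hza : (z : V) = a := by
          have hzAB : (z : V) ∈ A ∪ B := by
            have := hNv m hzadj
            simpa using this
          have hzY : (z : V) ∉ X \ V5 ∪ S \ {a} ∪ {u} := fun h => z.2 h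
          simp only [Finset.mem_union, Finset.mem_sdiff, Finset.mem_singleton, not_or] at hzY
          obtain ⟨⟨hz1, hz2⟩, _⟩ := hzY
          have hzV5 : (z : V) ∉ V5 := by
            rw [hV5def, Finset.mem_image]
            rintro ⟨i, _, hvi⟩
            rw [← hvi] at hzAB
            rcases Finset.mem_union.mp hzAB with h' | h'
            · exact hvA i h'
            · exact hvB i h'
          have hzX : (z : V) ∉ X := fun h => hz1 ⟨h, hzV5⟩
          have hzS : (z : V) ∈ S := by rw [hSdef, Finset.mem_sdiff]; exact ⟨hzAB, hzX⟩
          by_contra hne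
          exact hz2 ⟨hzS, hne⟩
        exact hyz (Subtype.ext (hya.trans hza.symm))
      -- now map the cycle to G and contradict hF
      let f : (G.induce ((↑Y : Set V)ᶜ)) →g G := SimpleGraph.Hom.comap Subtype.val G
      have hfinj : Function.Injective f := Subtype.val_injective
      refine hF _ (c.map f) (hc.map hfinj) ?_
      intro w hw
      rw [Walk.support_map, List.mem_map] at hw
      obtain ⟨w0, hw0, rfl⟩ := hw
      have hwY : (w0 : V) ∉ X \ V5 ∪ S \ {a} ∪ {u} := fun h => w0.2 h
      simp only [Finset.mem_union, Finset.mem_sdiff, Finset.mem_singleton, not_or] at hwY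
      obtain ⟨⟨hw1, _⟩, hwu⟩ := hwY
      have hwV5 : (w0 : V) ∉ V5 := by
        rw [hV5def, Finset.mem_image]
        rintro ⟨i, _, hvi⟩
        exact hnotwin w0 hw0 i hvi.symm
      exact ⟨fun h => hw1 ⟨h, hwV5⟩, hwu⟩
    · -- X itself works
      push_neg at hcase
      refine ⟨X, hXcard ▸ hX'k, ?_⟩
      intro x c hc
      by_cases hu : ∃ (w0 : ((↑X : Set V)ᶜ : Set V)), w0 ∈ c.support ∧ (w0 : V) = u
      · obtain ⟨w0, hw0, hwu⟩ := hu
        have hc' := hc.rotate hw0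
        obtain ⟨y, z, hyz, hy, hz⟩ := cycle_two_nbrs hc'
        have hyadj : G.Adj u (y : V) := by
          have := hy
          simp only [comap_adj, Function.Embedding.coe_subtype] at this
          rwa [hwu] at this
        have hzadj : G.Adj u (z : V) := by
          have := hz
          simp only [comap_adj, Function.Embedding.coe_subtype] at this
          rwa [hwu] at this
        have hyX : (y : V) ∉ X := fun h => y.2 h
        have hzX : (z : V) ∉ X := fun h => z.2 h
        exact hzX (hcase (y : V) hyadj (z : V) hzadj
          (fun h => hyz (Subtype.ext h)) hyX)
      · push_neg at hu
        let f : (G.induce ((↑X : Set V)ᶜ)) →g G := SimpleGraph.Hom.comap Subtype.val G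
        have hfinj : Function.Injective f := Subtype.val_injective
        refine hF _ (c.map f) (hc.map hfinj) ?_
        intro w hw
        rw [Walk.support_map, List.mem_map] at hw
        obtain ⟨w0, hw0, rfl⟩ := hw
        exact ⟨fun h => w0.2 h, hu w0 hw0⟩
end

section
/- Let G be a graph with two adjacent vertices u and u' such that u has degree exactly 2 and u and u' have no common neighbor. Let G' be the graph obtained by contracting the edge uu'. Then for every k ≥ 0, G has a feedback vertex set of size at most k if and only if G' has a feedback vertex set of size at most k. -/
open SimpleGraph

/-- The graph obtained from `G` by contracting the edge `uv`: the vertex `v` is removed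
and `u` inherits its neighbors. -/
def contractEdge {V : Type*} (G : SimpleGraph V) (u v : V) :
    SimpleGraph {x : V // x ≠ v} :=
  SimpleGraph.fromRel (fun a b => G.Adj a.1 b.1 ∨ (a.1 = u ∧ G.Adj v b.1))

namespace R2Aux
open SimpleGraph Walk

variable {V W Z : Type*} {G : SimpleGraph V} {H : SimpleGraph W}

/-- Transfer a walk along a partially defined vertex map. -/
def transWalk (P : V → Prop) (f : ∀ x, P x → W)
    (hf : ∀ x y (hx : P x) (hy : P y), G.Adj x y → H.Adj (f x hx) (f y hy)) :
    ∀ {a b : V} (p : G.Walk a b) (_ : ∀ x ∈ p.support, P x),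
      H.Walk (f a (by simp_all)) (f b (by simp_all [Walk.end_mem_support]))
  | _, _, Walk.nil, _ => Walk.nil
  | _, _, Walk.cons h q, hp =>
      Walk.cons (hf _ _ (hp _ (by simp)) (hp _ (by simp)) h)
        (transWalk P f hf q (fun x hx => hp x (by simp [hx])))

theorem transWalk_support (P : V → Prop) (f : ∀ x, P x → W)
    (hf : ∀ x y (hx : P x) (hy : P y), G.Adj x y → H.Adj (f x hx) (f y hy))
    (g : W → Z) (g' : V → Z) (hg : ∀ x hx, g (f x hx) = g' x) :
    ∀ {a b : V} (p : G.Walk a b) (hp : ∀ x ∈ p.support, P x),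
      (transWalk P f hf p hp).support.map g = p.support.map g'
  | _, _, Walk.nil, hp => by simp [transWalk, hg]
  | _, _, Walk.cons h q, hp => by
      simp [transWalk, hg, transWalk_support P f hf g g' hg q _]

theorem transWalk_edges (P : V → Prop) (f : ∀ x, P x → W)
    (hf : ∀ x y (hx : P x) (hy : P y), G.Adj x y → H.Adj (f x hx) (f y hy))
    (g : W → Z) (g' : V → Z) (hg : ∀ x hx, g (f x hx) = g' x) :
    ∀ {a b : V} (p : G.Walk a b) (hp : ∀ x ∈ p.support, P x),
      (transWalk P f hf p hp).edges.map (Sym2.map g) = p.edges.map (Sym2.map g')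
  | _, _, Walk.nil, hp => by simp [transWalk]
  | _, _, Walk.cons h q, hp => by
      simp [transWalk, hg, transWalk_edges P f hf g g' hg q _]

theorem transWalk_length (P : V → Prop) (f : ∀ x, P x → W)
    (hf : ∀ x y (hx : P x) (hy : P y), G.Adj x y → H.Adj (f x hx) (f y hy))
    {a b : V} (p : G.Walk a b) (hp : ∀ x ∈ p.support, P x) :
    (transWalk P f hf p hp).length = p.length := by
  have h := congrArg List.length
    (transWalk_support P f hf (fun _ => ()) (fun _ => ()) (fun _ _ => rfl) p hp)
  simpa [Walk.length_support] using h

theorem transWalk_isCycle (P : V → Prop) (f : ∀ x, P x → W)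
    (hf : ∀ x y (hx : P x) (hy : P y), G.Adj x y → H.Adj (f x hx) (f y hy))
    (g : W → Z) (g' : V → Z) (hg : ∀ x hx, g (f x hx) = g' x)
    (hinj : Function.Injective g')
    {a : V} (p : G.Walk a a) (hp : ∀ x ∈ p.support, P x) (hc : p.IsCycle) :
    (transWalk P f hf p hp).IsCycle := by
  have hs := transWalk_support P f hf g g' hg p hp
  have he := transWalk_edges P f hf g g' hg p hp
  refine ⟨⟨⟨?_⟩, ?_⟩, ?_⟩
  · have h1 : (p.edges.map (Sym2.map g')).Nodup :=
      hc.edges_nodup.map (Sym2.map.injective hinj)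
    rw [← he] at h1
    exact h1.of_map _
  · intro hnil
    have := transWalk_length P f hf p hp
    rw [hnil] at this
    simp at this
    have := hc.three_le_length
    omega
  · have h1 : (p.support.tail.map g').Nodup := hc.support_nodup.map hinj
    have h2 : (transWalk P f hf p hp).support.tail.map g = p.support.tail.map g' := by
      rw [List.map_tail, List.map_tail, hs]
    rw [← h2] at h1
    exact h1.of_map _

theorem isFVS_iff {V : Type*} [Fintype V] (G : SimpleGraph V) (X : Finset V) :
    IsFVS G X ↔ ∀ ⦃v : V⦄ (c : G.Walk v v), c.IsCycle → ∃ x ∈ X, x ∈ c.support := by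
  constructor
  · intro h v c hc
    by_contra hno
    push_neg at hno
    have hp : ∀ x ∈ c.support, x ∈ ((↑X : Set V)ᶜ : Set V) := by
      intro x hx
      simp only [Set.mem_compl_iff, Finset.coe_sort_coe, Set.mem_setOf_eq, Finset.mem_coe]
      intro hxX
      exact hno x hxX hx
    have hf : ∀ x y (hx : x ∈ ((↑X : Set V)ᶜ : Set V)) (hy : y ∈ ((↑X : Set V)ᶜ : Set V)),
        G.Adj x y → (G.induce ((↑X : Set V)ᶜ)).Adj ⟨x, hx⟩ ⟨y, hy⟩ := by
      intro x y hx hy hxy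
      exact hxy
    have hcyc := transWalk_isCycle (fun x => x ∈ ((↑X : Set V)ᶜ : Set V))
      (fun x hx => (⟨x, hx⟩ : ((↑X : Set V)ᶜ : Set V))) hf Subtype.val id
      (fun _ _ => rfl) (fun _ _ h => h) c hp hc
    exact h _ hcyc
  · intro h v c hc
    have hc' : (c.map (Embedding.induce ((↑X : Set V)ᶜ)).toHom).IsCycle :=
      hc.map Subtype.val_injective
    obtain ⟨x, hxX, hxs⟩ := h _ hc'
    rw [Walk.support_map, List.mem_map] at hxs
    obtain ⟨y, hy, rfl⟩ := hxs
    exact y.2 (by simpa using hxX)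

theorem cycle_ends {z : W} (c : H.Walk z z) (hc : c.IsCycle) :
    ∃ (a b : W) (_ : H.Adj z a) (_ : H.Adj z b) (r : H.Walk a b),
      a ≠ b ∧ r.IsPath ∧ z ∉ r.support ∧ ∀ x ∈ r.support, x ∈ c.support := by
  obtain ⟨a, h1, q, rfl⟩ := Walk.not_nil_iff.mp hc.not_nil
  obtain ⟨hqp, hqe⟩ := (Walk.cons_isCycle_iff q h1).mp hc
  have hql : 2 ≤ q.length := by
    have := hc.three_le_length; simp [Walk.length_cons] at this; omega
  have hqr : ¬ q.reverse.Nil := by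
    rw [Walk.not_nil_iff_lt_length, Walk.length_reverse]; omega
  obtain ⟨b, h2, r', hr'⟩ := Walk.not_nil_iff.mp hqr
  have hzb : s(z, b) ∈ q.edges := by
    have : s(z, b) ∈ q.reverse.edges := by rw [hr']; simp
    rwa [Walk.edges_reverse, List.mem_reverse] at this
  have hab : a ≠ b := by rintro rfl; exact hqe hzb
  have hrev : q.reverse.IsPath := hqp.reverse
  rw [hr'] at hrev
  have hr'p : r'.IsPath := hrev.of_cons
  have hzr' : z ∉ r'.support := by
    have := hrev.support_nodup
    simp only [Walk.support_cons, List.nodup_cons] at this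
    exact this.1
  refine ⟨a, b, h1, h2, r'.reverse, hab, hr'p.reverse, ?_, ?_⟩
  · rwa [Walk.support_reverse, List.mem_reverse]
  · intro x hx
    rw [Walk.support_reverse, List.mem_reverse] at hx
    have : x ∈ q.reverse.support := by rw [hr']; simp [hx]
    rw [Walk.support_reverse, List.mem_reverse] at this
    simp [Walk.support_cons, this]

theorem mem_support_of_closed {z x : W} {c : H.Walk z z} (hn : ¬ c.Nil) :
    x ∈ c.support ↔ x ∈ c.support.tail := by
  obtain ⟨a, h, q, rfl⟩ := Walk.not_nil_iff.mp hn
  simp only [Walk.support_cons, List.tail_cons, List.mem_cons]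
  constructor
  · rintro (rfl | h')
    · exact q.end_mem_support
    · exact h'
  · exact Or.inr

theorem mem_support_rotate [DecidableEq W] {z x y : W} {c : H.Walk z z} (hc : c.IsCycle)
    (hx : x ∈ c.support) : y ∈ (c.rotate x hx).support ↔ y ∈ c.support := by
  rw [mem_support_of_closed (hc.rotate hx).not_nil, mem_support_of_closed hc.not_nil]
  exact (Walk.support_rotate c x hx).mem_iff

section Rules

variable {u u' : V}

theorem contract_adj {a b : {x : V // x ≠ u}} :
    (contractEdge G u' u).Adj a b ↔
      a ≠ b ∧ (G.Adj a.1 b.1 ∨ (a.1 = u' ∧ G.Adj u b.1) ∨ (b.1 = u' ∧ G.Adj u a.1)) := by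
  rw [contractEdge, fromRel_adj]
  constructor
  · rintro ⟨hne, (h | h) | (h | h)⟩
    · exact ⟨hne, Or.inl h⟩
    · exact ⟨hne, Or.inr (Or.inl h)⟩
    · exact ⟨hne, Or.inl h.symm⟩
    · exact ⟨hne, Or.inr (Or.inr h)⟩
  · rintro ⟨hne, h | h | h⟩
    · exact ⟨hne, Or.inl (Or.inl h)⟩
    · exact ⟨hne, Or.inl (Or.inr h)⟩
    · exact ⟨hne, Or.inr (Or.inr h)⟩

theorem genuine_adj {a b : V} (ha : a ≠ u) (hb : b ≠ u) (h : G.Adj a b) :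
    (contractEdge G u' u).Adj ⟨a, ha⟩ ⟨b, hb⟩ := by
  rw [contract_adj]
  exact ⟨by simp [Subtype.ext_iff, h.ne], Or.inl h⟩

theorem down_adj {a b : {x : V // x ≠ u}} (ha : a.1 ≠ u') (hb : b.1 ≠ u')
    (h : (contractEdge G u' u).Adj a b) : G.Adj a.1 b.1 := by
  rw [contract_adj] at h
  rcases h.2 with h' | h' | h'
  · exact h'
  · exact absurd h'.1 ha
  · exact absurd h'.1 hb

variable [Fintype V] [DecidableEq V] [DecidableRel G.Adj]

theorem nbr_eq (hdeg : G.degree u = 2) {a b c : V} (ha : G.Adj u a) (hb : G.Adj u b)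
    (hab : a ≠ b) (hc : G.Adj u c) : c = a ∨ c = b := by
  have h1 : ({a, b} : Finset V) ⊆ G.neighborFinset u := by
    intro x hx
    simp only [Finset.mem_insert, Finset.mem_singleton] at hx
    rcases hx with rfl | rfl <;> simp [mem_neighborFinset, ha, hb]
  have hcard : (G.neighborFinset u).card ≤ ({a, b} : Finset V).card := by
    have h2 : ({a, b} : Finset V).card = 2 := by
      rw [Finset.card_insert_of_notMem (by simp [hab]), Finset.card_singleton]
    rw [h2, ← hdeg]
    rfl
  have heq : ({a, b} : Finset V) = G.neighborFinset u := Finset.eq_of_subset_of_card_le h1 hcard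
  have : c ∈ G.neighborFinset u := (mem_neighborFinset G u c).2 hc
  rw [← heq] at this
  simpa using this

theorem push_cycle (A : V → Prop) {v : V} (c : G.Walk v v) (hc : c.IsCycle)
    (hA : ∀ x ∈ c.support, ¬ A x) (hu : u ∉ c.support) :
    ∃ (z : {x : V // x ≠ u}) (d : (contractEdge G u' u).Walk z z),
      d.IsCycle ∧ ∀ x ∈ d.support, ¬ A x.1 := by
  have hp : ∀ x ∈ c.support, x ≠ u := fun x hx h => hu (h ▸ hx)
  have hf : ∀ x y (hx : x ≠ u) (hy : y ≠ u), G.Adj x y →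
      (contractEdge G u' u).Adj ⟨x, hx⟩ ⟨y, hy⟩ := fun x y hx hy h => genuine_adj hx hy h
  refine ⟨_, transWalk _ _ hf c hp, transWalk_isCycle _ _ hf Subtype.val id (fun _ _ => rfl)
      (fun _ _ h => h) c hp hc, ?_⟩
  intro x hx
  have hs := transWalk_support _ _ hf Subtype.val id (fun _ _ => rfl) c hp
  rw [List.map_id] at hs
  have : x.1 ∈ c.support := by
    have := List.mem_map_of_mem (f := Subtype.val) hx
    rwa [hs] at this
  exact hA _ this

theorem contract_core (hadj : G.Adj u u') (hcommon : ∀ w, ¬ (G.Adj u w ∧ G.Adj u' w))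
    (A : V → Prop) {w : V} (hw : G.Adj u w) (hwu' : w ≠ u')
    (r : G.Walk w u') (hr : r.IsPath) (hur : u ∉ r.support)
    (hA : ∀ x ∈ r.support, ¬ A x) :
    ∃ (z : {x : V // x ≠ u}) (d : (contractEdge G u' u).Walk z z),
      d.IsCycle ∧ ∀ x ∈ d.support, ¬ A x.1 := by
  have hp : ∀ x ∈ r.support, x ≠ u := fun x hx h => hur (h ▸ hx)
  have hf : ∀ x y (hx : x ≠ u) (hy : y ≠ u), G.Adj x y →
      (contractEdge G u' u).Adj ⟨x, hx⟩ ⟨y, hy⟩ := fun x y hx hy h => genuine_adj hx hy h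
  have hsup := transWalk_support _ _ hf Subtype.val id (fun _ _ => rfl) r hp
  have hedg := transWalk_edges _ _ hf Subtype.val id (fun _ _ => rfl) r hp
  rw [List.map_id] at hsup
  have hadj' : (contractEdge G u' u).Adj ⟨u', hadj.ne'⟩ ⟨w, hw.ne'⟩ := by
    rw [contract_adj]
    exact ⟨by simp [Subtype.ext_iff, Ne.symm hwu'], Or.inr (Or.inl ⟨rfl, hw⟩)⟩
  refine ⟨_, Walk.cons hadj' (transWalk _ _ hf r hp), ?_, ?_⟩
  · rw [Walk.cons_isCycle_iff]
    constructor
    · apply Walk.IsPath.mk'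
      have h1 : ((transWalk _ _ hf r hp).support.map Subtype.val).Nodup := by
        rw [hsup]; exact hr.support_nodup
      exact h1.of_map _
    · intro hmem
      have h2 : s(u', w) ∈ r.edges := by
        have h3 := List.mem_map_of_mem (f := Sym2.map Subtype.val) hmem
        rw [hedg] at h3
        simpa using h3
      exact hcommon w ⟨hw, r.adj_of_mem_edges h2⟩
  · intro x hx
    simp only [Walk.support_cons, List.mem_cons] at hx
    rcases hx with rfl | hx
    · exact hA u' r.end_mem_support
    · have : x.1 ∈ r.support := by
        have := List.mem_map_of_mem (f := Subtype.val) hx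
        rwa [hsup] at this
      exact hA _ this

theorem contract_cycle (hadj : G.Adj u u') (hdeg : G.degree u = 2)
    (hcommon : ∀ w, ¬ (G.Adj u w ∧ G.Adj u' w))
    (A : V → Prop) {v : V} (c : G.Walk v v) (hc : c.IsCycle)
    (hA : ∀ x ∈ c.support, ¬ A x) (hu : u ∈ c.support) :
    ∃ (z : {x : V // x ≠ u}) (d : (contractEdge G u' u).Walk z z),
      d.IsCycle ∧ ∀ x ∈ d.support, ¬ A x.1 := by
  have hc' : (c.rotate u hu).IsCycle := hc.rotate hu
  obtain ⟨a, b, ha, hb, r, hab, hrp, hur, hsub⟩ := cycle_ends _ hc'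
  have hAr : ∀ x ∈ r.support, ¬ A x := fun x hx =>
    hA _ ((mem_support_rotate hc hu).1 (hsub x hx))
  rcases nbr_eq hdeg ha hb hab hadj with h | h
  · subst h
    exact contract_core hadj hcommon A hb (Ne.symm hab) r.reverse hrp.reverse
      (by rwa [Walk.support_reverse, List.mem_reverse])
      (fun x hx => hAr x (by rwa [Walk.support_reverse, List.mem_reverse] at hx))
  · subst h
    exact contract_core hadj hcommon A ha hab r hrp hur hAr

theorem expand_core (hadj : G.Adj u u')
    (A : V → Prop) (hAu : ¬ A u) (hAu' : ¬ A u')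
    {a b : {x : V // x ≠ u}} (hab : a ≠ b)
    (ha' : G.Adj u' a.1) (hb2 : G.Adj u' b.1 ∨ G.Adj u b.1)
    (r : (contractEdge G u' u).Walk a b) (hrp : r.IsPath)
    (hur : (⟨u', hadj.ne'⟩ : {x : V // x ≠ u}) ∉ r.support)
    (hA : ∀ x ∈ r.support, ¬ A x.1) :
    ∃ (v : V) (c : G.Walk v v), c.IsCycle ∧ ∀ x ∈ c.support, ¬ A x := by
  have hp : ∀ x ∈ r.support, x ≠ (⟨u', hadj.ne'⟩ : {x : V // x ≠ u}) :=
    fun x hx h => hur (h ▸ hx)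
  have hf : ∀ (x y : {x : V // x ≠ u}) (hx : x ≠ (⟨u', hadj.ne'⟩ : {x : V // x ≠ u}))
      (hy : y ≠ (⟨u', hadj.ne'⟩ : {x : V // x ≠ u})),
      (contractEdge G u' u).Adj x y → G.Adj x.1 y.1 := by
    intro x y hx hy h
    exact down_adj (fun e => hx (Subtype.ext e)) (fun e => hy (Subtype.ext e)) h
  have hsup := transWalk_support _ (fun (x : {x : V // x ≠ u}) _ => x.1) hf id Subtype.val (fun _ _ => rfl) r hp
  rw [List.map_id] at hsup
  set r₀ := transWalk _ (fun (x : {x : V // x ≠ u}) _ => x.1) hf r hp with hr₀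
  have hu'₀ : u' ∉ r₀.support := by
    rw [hsup]
    intro hmem
    rw [List.mem_map] at hmem
    obtain ⟨y, hy, hyv⟩ := hmem
    exact hp y hy (Subtype.ext hyv)
  have hu₀ : u ∉ r₀.support := by
    rw [hsup]
    intro hmem
    rw [List.mem_map] at hmem
    obtain ⟨y, hy, hyv⟩ := hmem
    exact y.2 hyv
  have h₀nodup : r₀.support.Nodup := by
    rw [hsup]
    exact hrp.support_nodup.map Subtype.val_injective
  have hAr : ∀ x ∈ r₀.support, ¬ A x := by
    intro x hx
    rw [hsup, List.mem_map] at hx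
    obtain ⟨y, hy, rfl⟩ := hx
    exact hA y hy
  have hau' : a.1 ≠ u' := by
    intro e
    have he : a = (⟨u', hadj.ne'⟩ : {x : V // x ≠ u}) := Subtype.ext e
    exact hur (he ▸ r.start_mem_support)
  have hbu' : b.1 ≠ u' := by
    intro e
    have he : b = (⟨u', hadj.ne'⟩ : {x : V // x ≠ u}) := Subtype.ext e
    exact hur (he ▸ r.end_mem_support)
  have habv : a.1 ≠ b.1 := fun e => hab (Subtype.ext e)
  rcases hb2 with hbg | hbu
  · refine ⟨u', Walk.cons ha' (r₀.append (Walk.cons hbg.symm Walk.nil)), ?_, ?_⟩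
    · rw [Walk.cons_isCycle_iff]
      constructor
      · apply Walk.IsPath.mk'
        rw [Walk.support_append]
        simp only [Walk.support_cons, Walk.support_nil, List.tail_cons]
        rw [List.nodup_append]
        exact ⟨h₀nodup, List.nodup_singleton _, by
            intro x hx y hy; rw [List.mem_singleton] at hy; subst hy; rintro rfl; exact hu'₀ hx⟩
      · rw [Walk.edges_append]
        simp only [Walk.edges_cons, Walk.edges_nil, List.mem_append, List.mem_cons,
          List.not_mem_nil, or_false]
        rintro (hmem | hmem)
        · exact hu'₀ (r₀.fst_mem_support_of_mem_edges hmem)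
        · rw [Sym2.eq_iff] at hmem
          rcases hmem with ⟨h1, h2⟩ | ⟨h1, h2⟩
          · exact hbu' h1.symm
          · exact habv h2
    · intro x hx
      simp only [Walk.support_cons, Walk.support_append, Walk.support_nil, List.tail_cons,
        List.mem_cons, List.mem_append, List.mem_singleton] at hx
      rcases hx with rfl | hx | hlast
      · exact hAu'
      · exact hAr x hx
      · rcases hlast with rfl | hemp
        · exact hAu'
        · simp at hemp
  · refine ⟨u', Walk.cons ha' (r₀.append (Walk.cons hbu.symm (Walk.cons hadj Walk.nil))), ?_, ?_⟩
    · rw [Walk.cons_isCycle_iff]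
      constructor
      · apply Walk.IsPath.mk'
        rw [Walk.support_append]
        simp only [Walk.support_cons, Walk.support_nil, List.tail_cons]
        rw [List.nodup_append]
        refine ⟨h₀nodup, ?_, ?_⟩
        · simp [hadj.ne]
        · intro x hx
          simp only [List.mem_cons, List.not_mem_nil, or_false, List.mem_singleton]
          rintro b (rfl | rfl) rfl
          · exact hu₀ hx
          · exact hu'₀ hx
      · rw [Walk.edges_append]
        simp only [Walk.edges_cons, Walk.edges_nil, List.mem_append, List.mem_cons,
          List.not_mem_nil, or_false]
        rintro (hmem | hmem | hmem)
        · exact hu'₀ (r₀.fst_mem_support_of_mem_edges hmem)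
        · rw [Sym2.eq_iff] at hmem
          rcases hmem with ⟨h1, h2⟩ | ⟨h1, h2⟩
          · exact a.2 h2
          · exact hadj.ne' h1
        · rw [Sym2.eq_iff] at hmem
          rcases hmem with ⟨h1, h2⟩ | ⟨h1, h2⟩
          · exact hadj.ne' h1
          · exact a.2 h2
    · intro x hx
      simp only [Walk.support_cons, Walk.support_append, Walk.support_nil, List.tail_cons,
        List.mem_cons, List.mem_append, List.mem_singleton] at hx
      rcases hx with rfl | hx | rfl | hlast
      · exact hAu'
      · exact hAr x hx
      · exact hAu
      · rcases hlast with rfl | hemp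
        · exact hAu'
        · simp at hemp

theorem expand_cycle (hadj : G.Adj u u') (hdeg : G.degree u = 2)
    (A : V → Prop) (hAu : ¬ A u) {z : {x : V // x ≠ u}}
    (d : (contractEdge G u' u).Walk z z) (hd : d.IsCycle)
    (hA : ∀ x ∈ d.support, ¬ A x.1) :
    ∃ (v : V) (c : G.Walk v v), c.IsCycle ∧ ∀ x ∈ c.support, ¬ A x := by
  by_cases hu' : (⟨u', hadj.ne'⟩ : {x : V // x ≠ u}) ∈ d.support
  · have hd' : (d.rotate _ hu').IsCycle := hd.rotate hu'
    obtain ⟨a, b, ha, hb, r, hab, hrp, hur, hsub⟩ := cycle_ends _ hd'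
    have hAr : ∀ x ∈ r.support, ¬ A x.1 := fun x hx =>
      hA _ ((mem_support_rotate hd hu').1 (hsub x hx))
    have hAu' : ¬ A u' := hA _ hu'
    have hane : a.1 ≠ u' := fun e => ha.ne (Subtype.ext e.symm)
    have hbne : b.1 ≠ u' := fun e => hb.ne (Subtype.ext e.symm)
    have ha2 : G.Adj u' a.1 ∨ G.Adj u a.1 := by
      rcases (contract_adj.mp ha).2 with h | h | h
      · exact Or.inl h
      · exact Or.inr h.2
      · exact absurd h.1 hane
    have hb2 : G.Adj u' b.1 ∨ G.Adj u b.1 := by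
      rcases (contract_adj.mp hb).2 with h | h | h
      · exact Or.inl h
      · exact Or.inr h.2
      · exact absurd h.1 hbne
    rcases ha2 with hag | hau
    · exact expand_core hadj A hAu hAu' hab hag hb2 r hrp hur hAr
    · rcases hb2 with hbg | hbu
      · exact expand_core hadj A hAu hAu' hab.symm hbg (Or.inr hau) r.reverse hrp.reverse
          (by rwa [Walk.support_reverse, List.mem_reverse])
          (fun x hx => hAr x (by rwa [Walk.support_reverse, List.mem_reverse] at hx))
      · rcases nbr_eq hdeg hau hbu (fun e => hab (Subtype.ext e)) hadj with e | e
        · exact absurd e.symm hane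
        · exact absurd e.symm hbne
  · have hp : ∀ x ∈ d.support, x ≠ (⟨u', hadj.ne'⟩ : {x : V // x ≠ u}) :=
      fun x hx h => hu' (h ▸ hx)
    have hf : ∀ (x y : {x : V // x ≠ u}) (hx : x ≠ (⟨u', hadj.ne'⟩ : {x : V // x ≠ u}))
        (hy : y ≠ (⟨u', hadj.ne'⟩ : {x : V // x ≠ u})),
        (contractEdge G u' u).Adj x y → G.Adj x.1 y.1 := by
      intro x y hx hy h
      exact down_adj (fun e => hx (Subtype.ext e)) (fun e => hy (Subtype.ext e)) h
    refine ⟨z.1, transWalk _ (fun (x : {x : V // x ≠ u}) _ => x.1) hf d hp,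
      transWalk_isCycle _ _ hf id Subtype.val (fun _ _ => rfl) Subtype.val_injective d hp hd, ?_⟩
    intro x hx
    have hsup := transWalk_support _ (fun (x : {x : V // x ≠ u}) _ => x.1) hf id Subtype.val (fun _ _ => rfl) d hp
    rw [List.map_id] at hsup
    rw [hsup, List.mem_map] at hx
    obtain ⟨y, hy, rfl⟩ := hx
    exact hA y hy

end Rules
end R2Aux

/-- Safeness of rule (R2): contracting an edge `u u'` where `u` has degree two and
`u`, `u'` have no common neighbor does not change having a feedback vertex set of
size at most `k`. -/
theorem fvs_rule_R2 {V : Type*} [Fintype V] [DecidableEq V]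
    (G : SimpleGraph V) [DecidableRel G.Adj] (u u' : V)
    (hadj : G.Adj u u')
    (hdeg : G.degree u = 2)
    (hcommon : ∀ w, ¬ (G.Adj u w ∧ G.Adj u' w)) (k : ℕ) :
    HasFVS G k ↔ HasFVS (contractEdge G u' u) k := by
  constructor
  · rintro ⟨X, hXk, hX⟩
    classical
    set X₁ : Finset V := if u ∈ X then insert u' (X.erase u) else X with hX₁def
    have huX₁ : u ∉ X₁ := by
      by_cases h : u ∈ X
      · simp only [hX₁def, if_pos h, Finset.mem_insert, Finset.mem_erase]
        push_neg
        exact ⟨hadj.ne, fun h' => absurd rfl h'⟩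
      · simp only [hX₁def, if_neg h]
        exact h
    have hX₁k : X₁.card ≤ k := by
      by_cases h : u ∈ X
      · rw [hX₁def, if_pos h]
        have h1 := Finset.card_insert_le u' (X.erase u)
        have h2 : (X.erase u).card = X.card - 1 := Finset.card_erase_of_mem h
        have h3 : 1 ≤ X.card := Finset.card_pos.2 ⟨u, h⟩
        omega
      · rw [hX₁def, if_neg h]; exact hXk
    have hX₁fvs : ∀ ⦃v : V⦄ (c : G.Walk v v), c.IsCycle → ∃ x ∈ X₁, x ∈ c.support := by
      intro v c hc
      by_contra hno
      push_neg at hno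
      obtain ⟨x, hxX, hxs⟩ := (R2Aux.isFVS_iff G X).1 hX c hc
      by_cases hmem : u ∈ X
      · rw [hX₁def, if_pos hmem] at hno
        have hu's : u' ∉ c.support := hno u' (Finset.mem_insert_self _ _)
        have hus : u ∉ c.support := by
          intro hus
          have hc' := hc.rotate hus
          obtain ⟨a, b, ha, hb, r, hab, _, _, hsub⟩ := R2Aux.cycle_ends _ hc'
          have hu'mem : u' ∈ (c.rotate u hus).support := by
            rcases R2Aux.nbr_eq hdeg ha hb hab hadj with rfl | rfl
            · exact hsub _ r.start_mem_support
            · exact hsub _ r.end_mem_support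
          exact hu's ((R2Aux.mem_support_rotate hc hus).1 hu'mem)
        rcases eq_or_ne x u with rfl | hxu
        · exact hus hxs
        · exact hno x (Finset.mem_insert_of_mem (Finset.mem_erase.2 ⟨hxu, hxX⟩)) hxs
      · rw [hX₁def, if_neg hmem] at hno
        exact hno x hxX hxs
    refine ⟨X₁.subtype (· ≠ u), ?_, ?_⟩
    · rw [Finset.card_subtype]
      exact le_trans (Finset.card_filter_le _ _) hX₁k
    · rw [R2Aux.isFVS_iff]
      intro z d hd
      by_contra hno
      push_neg at hno
      have hAv : ∀ x ∈ d.support, ¬ x.1 ∈ X₁ := by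
        intro x hx hmem
        exact hno x (Finset.mem_subtype.2 hmem) hx
      obtain ⟨v, c, hcyc, hcA⟩ := R2Aux.expand_cycle hadj hdeg (· ∈ X₁) huX₁ d hd hAv
      obtain ⟨x, hx1, hx2⟩ := hX₁fvs c hcyc
      exact hcA x hx2 hx1
  · rintro ⟨Y, hYk, hY⟩
    classical
    refine ⟨Y.image Subtype.val, le_trans Finset.card_image_le hYk, ?_⟩
    rw [R2Aux.isFVS_iff]
    intro v c hc
    by_contra hno
    push_neg at hno
    have hA : ∀ x ∈ c.support, ¬ x ∈ Y.image Subtype.val := fun x hx hm => hno x hm hx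
    have hY' := (R2Aux.isFVS_iff _ Y).1 hY
    by_cases hu : u ∈ c.support
    · obtain ⟨z, d, hd, hdA⟩ :=
        R2Aux.contract_cycle hadj hdeg hcommon (· ∈ Y.image Subtype.val) c hc hA hu
      obtain ⟨y, hy1, hy2⟩ := hY' d hd
      exact hdA y hy2 (Finset.mem_image_of_mem _ hy1)
    · obtain ⟨z, d, hd, hdA⟩ :=
        R2Aux.push_cycle (u' := u') (· ∈ Y.image Subtype.val) c hc hA hu
      obtain ⟨y, hy1, hy2⟩ := hY' d hd
      exact hdA y hy2 (Finset.mem_image_of_mem _ hy1)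
end

section
/- Let G be a graph, K = {v₁,…,v_q} a clique in G, and u, w two vertices outside K that are non-adjacent to every vertex of G outside K (i.e., N(u), N(w) ⊆ K), with u ≠ w and u, w non-adjacent. Suppose there exist indices 1 ≤ q_u ≤ q_w ≤ q with N(u) = {v₁,…,v_{q_u}} and N(w) = {v₁,…,v_{q_w}}. Then for every k ≥ 0, G has a feedback vertex set of size at most k if and only if G − u has a feedback vertex set of size at most k. -/
open SimpleGraph

namespace R3Aux

variable {α β : Type*}

lemma acyclic_of_hom {G : SimpleGraph α} {H : SimpleGraph β} (f : G →g H)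
    (hf : Function.Injective f) (h : H.IsAcyclic) : G.IsAcyclic :=
  fun _ c hc => h (c.map f) (hc.map hf)

lemma acyclic_induce_mono {G : SimpleGraph α} {s t : Set α} (hst : s ⊆ t)
    (h : (G.induce t).IsAcyclic) : (G.induce s).IsAcyclic :=
  acyclic_of_hom ⟨Set.inclusion hst, fun hadj => hadj⟩ (Set.inclusion_injective hst) h

lemma not_acyclic_triangle {H : SimpleGraph α} {a b c : α} (hab : H.Adj a b)
    (hbc : H.Adj b c) (hca : H.Adj c a) : ¬ H.IsAcyclic := by
  intro h
  refine h (Walk.cons hab (Walk.cons hbc (Walk.cons hca Walk.nil))) ?_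
  rw [Walk.cons_isCycle_iff]
  have h1 := hab.ne; have h2 := hbc.ne; have h3 := hca.ne
  have h1' := hab.ne'; have h2' := hbc.ne'; have h3' := hca.ne'
  constructor
  · simp [Walk.cons_isPath_iff, Walk.isPath_def]; tauto
  · simp [Sym2.eq_iff]; tauto

lemma two_neighbors {H : SimpleGraph α} {u : α} (c : H.Walk u u) (hc : c.IsCycle) :
    ∃ x y, H.Adj u x ∧ H.Adj u y ∧ x ≠ y := by
  cases c with
  | nil => exact absurd rfl hc.ne_nil
  | @cons _ x _ h t =>
    rw [Walk.cons_isCycle_iff] at hc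
    obtain ⟨ht, he⟩ := hc
    cases hre : t.reverse with
    | nil => exact absurd rfl h.ne
    | @cons _ y _ h' t' =>
      have hmem : s(u, y) ∈ t.edges := by
        have : s(u, y) ∈ t.reverse.edges := by rw [hre]; simp
        rwa [Walk.edges_reverse, List.mem_reverse] at this
      exact ⟨x, y, h, h', fun hxy => he (hxy ▸ hmem)⟩

/-- Inclusion homomorphism from an induced subgraph. -/
def inclHom (G : SimpleGraph α) (t : Set α) : G.induce t →g G :=
  ⟨Subtype.val, fun h => h⟩

lemma lift_walk {G : SimpleGraph α} {t : Set α} {a b : α} (p : G.Walk a b)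
    (h : ∀ x ∈ p.support, x ∈ t) :
    ∃ q : (G.induce t).Walk ⟨a, h a p.start_mem_support⟩ ⟨b, h b p.end_mem_support⟩,
      q.map (inclHom G t) = p := by
  induction p with
  | nil => exact ⟨Walk.nil, rfl⟩
  | @cons a x b hadj p ih =>
    obtain ⟨q, hq⟩ := ih (fun y hy => h y (by simp [hy]))
    exact ⟨Walk.cons (by exact hadj : (G.induce t).Adj ⟨a, _⟩ ⟨x, _⟩) q,
      by exact congrArg (Walk.cons hadj) hq⟩

lemma acyclic_induce_insert [DecidableEq α] {G : SimpleGraph α} {s : Set α} {u : α}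
    (h : (G.induce s).IsAcyclic)
    (hdeg : ∀ x y, x ∈ s → y ∈ s → G.Adj u x → G.Adj u y → x = y) :
    (G.induce (insert u s)).IsAcyclic := by
  intro a c hc
  by_cases hmem : (⟨u, Set.mem_insert u s⟩ : ↥(insert u s)) ∈ c.support
  · have hdc : (c.rotate _ hmem).IsCycle := hc.rotate hmem
    obtain ⟨x, y, hx, hy, hxy⟩ := two_neighbors _ hdc
    have hadjx : G.Adj u (x : α) := hx
    have hadjy : G.Adj u (y : α) := hy
    have hxs : (x : α) ∈ s := x.2.resolve_left (fun h1 => hadjx.ne h1.symm)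
    have hys : (y : α) ∈ s := y.2.resolve_left (fun h1 => hadjy.ne h1.symm)
    exact hxy (Subtype.ext (hdeg x y hxs hys hadjx hadjy))
  · have hmap : (c.map (inclHom G (insert u s))).IsCycle :=
      hc.map (f := inclHom G (insert u s)) Subtype.val_injective
    have hsupp : ∀ z ∈ (c.map (inclHom G (insert u s))).support, z ∈ s := by
      intro z hz
      rw [Walk.support_map, List.mem_map] at hz
      obtain ⟨z', hz', rfl⟩ := hz
      refine z'.2.resolve_left (fun h1 => hmem ?_)
      have : z' = ⟨u, Set.mem_insert u s⟩ := Subtype.ext h1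
      rwa [this] at hz'
    obtain ⟨q, hq⟩ := lift_walk _ hsupp
    have hqc : q.IsCycle := by
      rw [← Walk.map_isCycle_iff_of_injective (f := inclHom G s) Subtype.val_injective, hq]
      exact hmap
    exact h q hqc

end R3Aux

/-- Safeness of rule (R3): if `u` and `w` are non-adjacent vertices outside the clique
`K = {v 0, …, v (q-1)}` whose neighborhoods are nested prefixes of `K`, then `u`
may be deleted. -/
theorem fvs_rule_R3 {V : Type*} [Fintype V] [DecidableEq V]
    (G : SimpleGraph V) (q : ℕ) (v : Fin q → V)
    (hvinj : Function.Injective v)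
    (hK : G.IsClique (Set.range v))
    (u w : V) (huw : u ≠ w) (hnadj : ¬ G.Adj u w)
    (hu : u ∉ Set.range v) (hw : w ∉ Set.range v)
    (qu qw : ℕ) (hqu1 : 1 ≤ qu) (hquw : qu ≤ qw) (hqwq : qw ≤ q)
    (hNu : G.neighborSet u = v '' {i | (i : ℕ) < qu})
    (hNw : G.neighborSet w = v '' {i | (i : ℕ) < qw})
    (k : ℕ) :
    HasFVS G k ↔ HasFVS (delVert G u) k := by
  have hNu' : ∀ x : V, G.Adj u x → ∃ i : Fin q, (i : ℕ) < qu ∧ v i = x := by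
    intro x hx
    have : x ∈ G.neighborSet u := hx
    rw [hNu] at this
    obtain ⟨i, hi, rfl⟩ := this
    exact ⟨i, hi, rfl⟩
  have hNw' : ∀ x : V, G.Adj w x → ∃ i : Fin q, (i : ℕ) < qw ∧ v i = x := by
    intro x hx
    have : x ∈ G.neighborSet w := hx
    rw [hNw] at this
    obtain ⟨i, hi, rfl⟩ := this
    exact ⟨i, hi, rfl⟩
  constructor
  · rintro ⟨X, hXk, hX⟩
    refine ⟨X.subtype (· ≠ u), le_trans ?_ hXk, ?_⟩
    · rw [Finset.card_subtype]; exact Finset.card_filter_le _ _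
    · have hmt : ∀ z : ((↑(X.subtype (· ≠ u)) : Set {x : V // x ≠ u})ᶜ : Set _),
          (z : {x : V // x ≠ u}).1 ∈ ((↑X : Set V)ᶜ) := by
        intro z hmem
        exact z.2 (by simpa [Finset.mem_subtype] using hmem)
      refine R3Aux.acyclic_of_hom
        (⟨fun z => ⟨z.1.1, hmt z⟩, fun {a b} hadj => hadj⟩ :
          (delVert G u).induce ((↑(X.subtype (· ≠ u)) : Set {x : V // x ≠ u})ᶜ) →g
            G.induce ((↑X : Set V)ᶜ)) ?_ hX
      intro a b hab
      have h1 := congrArg Subtype.val hab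
      exact Subtype.ext (Subtype.ext h1)
  · rintro ⟨X', hX'k, hX'⟩
    classical
    set Y : Finset V := X'.image Subtype.val with hYdef
    have hYcard : Y.card ≤ k := le_trans Finset.card_image_le hX'k
    have huY : u ∉ Y := by
      simp only [hYdef, Finset.mem_image]
      rintro ⟨a, _, ha⟩
      exact a.2 ha
    have hYmem : ∀ (z : V) (hz : z ≠ u), z ∈ Y ↔ (⟨z, hz⟩ : {x : V // x ≠ u}) ∈ X' := by
      intro z hz
      simp only [hYdef, Finset.mem_image]
      constructor
      · rintro ⟨a, ha, rfl⟩; exact (by cases a; exact ha)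
      · intro h; exact ⟨⟨z, hz⟩, h, rfl⟩
    -- The key acyclic graph: all vertices outside Y and different from u.
    have H1 : (G.induce ((↑Y : Set V)ᶜ \ {u})).IsAcyclic := by
      have hmt : ∀ z : (((↑Y : Set V)ᶜ \ {u}) : Set V),
          (⟨z.1, z.2.2⟩ : {x : V // x ≠ u}) ∈ ((↑X' : Set {x : V // x ≠ u})ᶜ) := by
        intro z hmem
        exact z.2.1 ((hYmem z.1 z.2.2).mpr hmem)
      refine R3Aux.acyclic_of_hom
        (⟨fun z => ⟨⟨z.1, z.2.2⟩, hmt z⟩, fun {a b} hadj => hadj⟩ :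
          G.induce ((↑Y : Set V)ᶜ \ {u}) →g
            (delVert G u).induce ((↑X' : Set {x : V // x ≠ u})ᶜ)) ?_ hX'
      intro a b hab
      have h1 := congrArg Subtype.val hab
      have h2 := congrArg Subtype.val h1
      exact Subtype.ext h2
    set S : Finset (Fin q) := Finset.univ.filter (fun i => (i : ℕ) < qu ∧ v i ∉ Y) with hSdef
    by_cases hS : S.card ≤ 1
    · -- at most one live neighbor of u: Y itself works
      refine ⟨Y, hYcard, ?_⟩
      have hset : ((↑Y : Set V)ᶜ) = insert u ((↑Y : Set V)ᶜ \ {u}) := by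
        rw [Set.insert_diff_singleton, Set.insert_eq_self.mpr (by simpa using huY)]
      rw [IsFVS, hset]
      refine R3Aux.acyclic_induce_insert H1 ?_
      intro x y hxm hym hx hy
      obtain ⟨i, hi, rfl⟩ := hNu' x hx
      obtain ⟨j, hj, rfl⟩ := hNu' y hy
      have hiS : i ∈ S := by
        simp only [hSdef, Finset.mem_filter, Finset.mem_univ, true_and]
        exact ⟨hi, fun hmem => hxm.1 (Finset.mem_coe.mpr hmem)⟩
      have hjS : j ∈ S := by
        simp only [hSdef, Finset.mem_filter, Finset.mem_univ, true_and]
        exact ⟨hj, fun hmem => hym.1 (Finset.mem_coe.mpr hmem)⟩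
      rw [Finset.card_le_one.mp hS i hiS j hjS]
    · -- at least two live neighbors v i, v j of u
      push_neg at hS
      obtain ⟨i, hiS, j, hjS, hij⟩ := Finset.one_lt_card.mp hS
      rw [hSdef, Finset.mem_filter] at hiS hjS
      obtain ⟨-, hi, hiY⟩ := hiS
      obtain ⟨-, hj, hjY⟩ := hjS
      have hvij : v i ≠ v j := fun h => hij (hvinj h)
      have hadjij : G.Adj (v i) (v j) := hK ⟨i, rfl⟩ ⟨j, rfl⟩ hvij
      have hadjw : ∀ l : Fin q, (l : ℕ) < qw → G.Adj w (v l) := by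
        intro l hl
        have : v l ∈ G.neighborSet w := by rw [hNw]; exact ⟨l, hl, rfl⟩
        exact this
      have hvu : ∀ l : Fin q, v l ≠ u := fun l h => hu ⟨l, h⟩
      have hvw : ∀ l : Fin q, v l ≠ w := fun l h => hw ⟨l, h⟩
      -- w must be in Y
      have hwY : w ∈ Y := by
        by_contra hwY
        refine R3Aux.not_acyclic_triangle
          (a := ⟨w, hwY, Ne.symm huw⟩) (b := ⟨v i, hiY, hvu i⟩) (c := ⟨v j, hjY, hvu j⟩)
          ?_ ?_ ?_ H1
        · exact hadjw i (lt_of_lt_of_le hi hquw)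
        · exact hadjij
        · exact (hadjw j (lt_of_lt_of_le hj hquw)).symm
      -- every other clique vertex with index < qw must be in Y
      have hlY : ∀ l : Fin q, (l : ℕ) < qw → l ≠ i → l ≠ j → v l ∈ Y := by
        intro l hl hli hlj
        by_contra hlY
        refine R3Aux.not_acyclic_triangle
          (a := ⟨v l, hlY, hvu l⟩) (b := ⟨v i, hiY, hvu i⟩) (c := ⟨v j, hjY, hvu j⟩)
          ?_ ?_ ?_ H1
        · exact hK ⟨l, rfl⟩ ⟨i, rfl⟩ (fun h => hli (hvinj h))
        · exact hadjij
        · exact hK ⟨j, rfl⟩ ⟨l, rfl⟩ (fun h => hlj (hvinj h).symm)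
      set X : Finset V := insert (v i) (Y.erase w) with hXdef
      have hYpos : 1 ≤ Y.card := Finset.card_pos.mpr ⟨w, hwY⟩
      have hXcard : X.card ≤ k := by
        calc X.card ≤ (Y.erase w).card + 1 := Finset.card_insert_le _ _
        _ = Y.card - 1 + 1 := by rw [Finset.card_erase_of_mem hwY]
        _ = Y.card := by omega
        _ ≤ k := hYcard
      have huX : u ∉ X := by
        simp only [hXdef, Finset.mem_insert, Finset.mem_erase]
        rintro ((h | ⟨-, h⟩))
        · exact hvu i h.symm
        · exact huY h
      have hwX : w ∉ X := by
        simp only [hXdef, Finset.mem_insert, Finset.mem_erase]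
        rintro ((h | ⟨h, -⟩))
        · exact hvw i h.symm
        · exact h rfl
      -- any surviving neighbor of u is v j, likewise for w
      have hkey : ∀ l : Fin q, (l : ℕ) < qw → v l ∉ X → l = j := by
        intro l hl hlX
        by_contra hlj
        have hli : l ≠ i := by
          rintro rfl
          exact hlX (by simp [hXdef])
        have : v l ∈ Y := hlY l hl hli hlj
        exact hlX (by simp [hXdef, Finset.mem_erase, hvw l, this])
      have hnbu : ∀ z : V, z ∉ (↑X : Set V) → G.Adj u z → z = v j := by
        intro z hz hadj
        obtain ⟨l, hl, rfl⟩ := hNu' z hadj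
        rw [hkey l (lt_of_lt_of_le hl hquw) hz]
      have hnbw : ∀ z : V, z ∉ (↑X : Set V) → G.Adj w z → z = v j := by
        intro z hz hadj
        obtain ⟨l, hl, rfl⟩ := hNw' z hadj
        rw [hkey l hl hz]
      refine ⟨X, hXcard, ?_⟩
      -- build up the acyclicity
      have hsub : (((↑X : Set V)ᶜ \ {u}) \ {w}) ⊆ ((↑Y : Set V)ᶜ \ {u}) := by
        rintro z ⟨⟨hzX, hzu⟩, hzw⟩
        refine ⟨fun hzY => hzX ?_, hzu⟩
        simp only [hXdef, Finset.coe_insert, Set.mem_insert_iff, Finset.coe_erase,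
          Set.mem_diff, Set.mem_singleton_iff]
        exact Or.inr ⟨hzY, hzw⟩
      have hA : (G.induce (((↑X : Set V)ᶜ \ {u}) \ {w})).IsAcyclic :=
        R3Aux.acyclic_induce_mono hsub H1
      have hB : (G.induce (insert w (((↑X : Set V)ᶜ \ {u}) \ {w}))).IsAcyclic := by
        refine R3Aux.acyclic_induce_insert hA ?_
        intro x y hxm hym hx hy
        rw [hnbw x hxm.1.1 hx, hnbw y hym.1.1 hy]
      have hC : (G.induce (insert u (insert w (((↑X : Set V)ᶜ \ {u}) \ {w})))).IsAcyclic := by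
        refine R3Aux.acyclic_induce_insert hB ?_
        intro x y hxm hym hx hy
        have hx' : x = v j := by
          rcases hxm with rfl | hxm
          · exact absurd hx hnadj
          · exact hnbu x hxm.1.1 hx
        have hy' : y = v j := by
          rcases hym with rfl | hym
          · exact absurd hy hnadj
          · exact hnbu y hym.1.1 hy
        rw [hx', hy']
      have hset : ((↑X : Set V)ᶜ) = insert u (insert w (((↑X : Set V)ᶜ \ {u}) \ {w})) := by
        ext z
        simp only [Set.mem_insert_iff, Set.mem_diff, Set.mem_compl_iff, Finset.mem_coe,
          Set.mem_singleton_iff]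
        constructor
        · intro hz
          by_cases h1 : z = u
          · exact Or.inl h1
          by_cases h2 : z = w
          · exact Or.inr (Or.inl h2)
          · exact Or.inr (Or.inr ⟨⟨hz, h1⟩, h2⟩)
        · rintro (rfl | rfl | ⟨⟨hz, -⟩, -⟩)
          · exact huX
          · exact hwX
          · exact hz
      rw [IsFVS, hset]
      exact hC
end

section
/- Let G be a graph, K = {v₁,…,v_q} a clique in G, and P a path on 7 vertices u₀,…,u₆ in G − K (a path of length six) such that every uᵢ has exactly two neighbors outside K (its path neighbors, with the endpoints having one path-neighbor each — more precisely, every vertex of P has degree two in G − K) and the neighborhood of each uᵢ inside K is a prefix {v₁,…,v_{q_i}} with q_i ≥ 1. Then G has a feedback vertex set of size at most k if and only if G − v₁ has a feedback vertex set of size at most k − 1; moreover G has a minimum feedback vertex set containing v₁. -/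
open SimpleGraph

namespace R7Aux

variable {V W : Type*}

lemma acyclic_of_injhom {G : SimpleGraph V} {H : SimpleGraph W} (f : G →g H)
    (hf : Function.Injective f) (hH : H.IsAcyclic) : G.IsAcyclic :=
  fun _ c hc => hH (c.map f) (hc.map hf)

lemma isAcyclic_induce_mono {G : SimpleGraph V} {S T : Set V} (hST : S ⊆ T)
    (hT : (G.induce T).IsAcyclic) : (G.induce S).IsAcyclic :=
  acyclic_of_injhom ⟨fun x => ⟨↑x, hST x.2⟩, fun {_ _} h => h⟩
    (fun _ _ h => by
      apply Subtype.ext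
      have h2 := congrArg Subtype.val h
      exact h2) hT

/-- Transfer a walk into an induced subgraph containing its support. -/
def toInduce {G : SimpleGraph V} (T : Set V) :
    ∀ {x y : V} (p : G.Walk x y) (hx : x ∈ T) (hy : y ∈ T),
      (∀ z ∈ p.support, z ∈ T) → (G.induce T).Walk ⟨x, hx⟩ ⟨y, hy⟩
  | _, _, Walk.nil, _, _, _ => Walk.nil
  | _, _, Walk.cons h p, hx, hy, hs =>
      Walk.cons (by exact h)
        (toInduce T p (hs _ (by simp)) hy (fun z hz => hs z (by simp [hz])))

lemma toInduce_map {G : SimpleGraph V} (T : Set V) :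
    ∀ {x y : V} (p : G.Walk x y) (hx : x ∈ T) (hy : y ∈ T)
      (hs : ∀ z ∈ p.support, z ∈ T),
      (toInduce T p hx hy hs).map (Embedding.induce T).toHom = p
  | _, _, Walk.nil, _, _, _ => rfl
  | _, _, Walk.cons h p, hx, hy, hs => by
      simp only [toInduce]
      exact congrArg (Walk.cons h) (toInduce_map T p _ hy _)

lemma exists_cycle_induce {G : SimpleGraph V} {T : Set V} {x : V}
    (c : G.Walk x x) (hc : c.IsCycle) (hT : ∀ z ∈ c.support, z ∈ T) :
    ∃ (y : T) (c' : (G.induce T).Walk y y), c'.IsCycle := by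
  have hx : x ∈ T := hT x c.start_mem_support
  refine ⟨⟨x, hx⟩, toInduce T c hx hx hT, ?_⟩
  have hinj : Function.Injective ((Embedding.induce (G := G) T).toHom) := by
    intro a b hab
    exact Subtype.ext hab
  rw [← Walk.map_isCycle_iff_of_injective hinj, toInduce_map]
  exact hc

lemma walk_stay {G : SimpleGraph V} {A B : Set V}
    (hcross : ∀ x ∈ A, ∀ y ∈ B, ¬G.Adj x y) :
    ∀ {x y : V} (p : G.Walk x y), x ∈ A → (∀ z ∈ p.support, z ∈ A ∪ B) →
      ∀ z ∈ p.support, z ∈ A := by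
  intro x y p
  induction p with
  | nil =>
    intro hx _ z hz
    simp only [Walk.support_nil, List.mem_singleton] at hz
    exact hz ▸ hx
  | @cons a b c h p ih =>
    intro hx hs z hz
    have hb : b ∈ A := by
      rcases hs b (by simp) with hb | hb
      · exact hb
      · exact absurd h (hcross _ hx _ hb)
    rw [Walk.support_cons, List.mem_cons] at hz
    rcases hz with rfl | hz
    · exact hx
    · exact ih hb (fun w hw => hs w (by simp [hw])) z hz

lemma induce_union_acyclic {G : SimpleGraph V} {A B : Set V}
    (hcross : ∀ x ∈ A, ∀ y ∈ B, ¬G.Adj x y)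
    (hA : (G.induce A).IsAcyclic) (hB : (G.induce B).IsAcyclic) :
    (G.induce (A ∪ B)).IsAcyclic := by
  intro w c hc
  have hinj : Function.Injective ((Embedding.induce (G := G) (A ∪ B)).toHom) := by
    intro a b hab
    exact Subtype.ext hab
  set c₀ := c.map (Embedding.induce (G := G) (A ∪ B)).toHom with hc₀def
  have hc₀ : c₀.IsCycle := hc.map hinj
  have hsup : ∀ z ∈ c₀.support, z ∈ A ∪ B := by
    intro z hz
    rw [hc₀def, Walk.support_map] at hz
    rcases List.mem_map.mp hz with ⟨z', _, rfl⟩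
    exact z'.2
  rcases w.2 with hw | hw
  · have hall : ∀ z ∈ c₀.support, z ∈ A := walk_stay hcross c₀ hw hsup
    obtain ⟨y, c', hcy⟩ := exists_cycle_induce c₀ hc₀ hall
    exact hA c' hcy
  · have hcross' : ∀ x ∈ B, ∀ y ∈ A, ¬G.Adj x y :=
      fun x hx y hy hadj => hcross y hy x hx hadj.symm
    have hsup' : ∀ z ∈ c₀.support, z ∈ B ∪ A := fun z hz => (hsup z hz).symm
    have hall : ∀ z ∈ c₀.support, z ∈ B := walk_stay hcross' c₀ hw hsup'
    obtain ⟨y, c', hcy⟩ := exists_cycle_induce c₀ hc₀ hall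
    exact hB c' hcy

lemma no_triangle {H : SimpleGraph W} (hH : H.IsAcyclic) {a b c : W}
    (hab : H.Adj a b) (hbc : H.Adj b c) (hca : H.Adj c a) : False := by
  have hpath : (Walk.cons hbc (Walk.cons hca Walk.nil)).IsPath := by
    rw [Walk.isPath_def]
    simp [hbc.ne, hca.ne, hab.ne']
  have hcyc : (Walk.cons hab (Walk.cons hbc (Walk.cons hca Walk.nil))).IsCycle := by
    rw [Walk.cons_isCycle_iff]
    refine ⟨hpath, ?_⟩
    simp [Sym2.eq_iff, hab.ne, hbc.ne, hca.ne, hab.ne', hbc.ne', hca.ne']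
  exact hH _ hcyc

/-- The linear (path) graph on `Fin n`. -/
def lineG (n : ℕ) : SimpleGraph (Fin n) where
  Adj i j := (i : ℕ) + 1 = (j : ℕ) ∨ (j : ℕ) + 1 = (i : ℕ)
  symm := ⟨fun i j h => Or.symm h⟩
  loopless := ⟨fun i h => by rcases h with h | h <;> omega⟩

lemma lineG_adj {n : ℕ} {i j : Fin n} :
    (lineG n).Adj i j ↔ (i : ℕ) + 1 = (j : ℕ) ∨ (j : ℕ) + 1 = (i : ℕ) := Iff.rfl

lemma lineG_acyclic (n : ℕ) : (lineG n).IsAcyclic := by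
  classical
  intro x c hc
  have hxe : x ∈ c.support := c.start_mem_support
  set s := c.support.toFinset with hsdef
  have hsne : s.Nonempty := ⟨x, by simp [hsdef, hxe]⟩
  set m := s.max' hsne with hmdef
  have hm : m ∈ c.support := by
    have := s.max'_mem hsne
    simpa [hsdef] using this
  have hmax : ∀ z ∈ c.support, z ≤ m := fun z hz => s.le_max' z (by simp [hsdef, hz])
  set c' := c.rotate m hm with hc'def
  have hc' : c'.IsCycle := hc.rotate hm
  have hsup' : ∀ z ∈ c'.support, z ≤ m := by
    intro z hz
    rw [Walk.support_eq_cons, List.mem_cons] at hz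
    rcases hz with rfl | hz
    · exact le_rfl
    · have hz' : z ∈ c.support.tail := (Walk.support_rotate c m hm).mem_iff.mp hz
      exact hmax z (List.mem_of_mem_tail hz')
  obtain ⟨a, ha, p, hp⟩ := Walk.not_nil_iff.mp hc'.not_nil
  have hcyc := hc'
  rw [hp, Walk.cons_isCycle_iff] at hcyc
  obtain ⟨hpathp, hedge⟩ := hcyc
  have hma : m ≠ a := ha.ne
  obtain ⟨b, hb, q, hq⟩ := Walk.exists_eq_cons_of_ne hma p.reverse
  have hbe : s(m, b) ∈ p.edges := by
    have h1 : s(m, b) ∈ p.reverse.edges := by rw [hq]; simp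
    rwa [Walk.edges_reverse, List.mem_reverse] at h1
  have hba : b ≠ a := by
    rintro rfl
    exact hedge hbe
  have haS : a ∈ c'.support := by
    rw [hp, Walk.support_cons]
    exact List.mem_cons_of_mem _ p.start_mem_support
  have hbS : b ∈ c'.support := by
    have h1 : b ∈ p.reverse.support := by
      rw [hq, Walk.support_cons]
      exact List.mem_cons_of_mem _ q.start_mem_support
    rw [Walk.support_reverse, List.mem_reverse] at h1
    rw [hp, Walk.support_cons]
    exact List.mem_cons_of_mem _ h1
  have h1 : (a : ℕ) ≤ (m : ℕ) := Fin.le_def.mp (hsup' a haS)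
  have h2 : (b : ℕ) ≤ (m : ℕ) := Fin.le_def.mp (hsup' b hbS)
  have ha' := lineG_adj.mp ha
  have hb' := lineG_adj.mp hb
  have hna : (a : ℕ) ≠ (m : ℕ) := fun h => hma (Fin.ext h.symm)
  have hnb : (b : ℕ) ≠ (m : ℕ) := fun h => hb.ne' (Fin.ext h)
  have : (a : ℕ) = (b : ℕ) := by omega
  exact hba (Fin.ext this.symm)

end R7Aux

/-- Safeness of rule (R7): given a clique `K = {v 0, …, v (q-1)}` and a path on seven
vertices `u 0, …, u 6` outside `K`, each of degree two in `G - K` and whose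
neighborhood in `K` is a non-empty prefix of `(v 0, …, v (q-1))`, the vertex `v 0`
can be forced into the solution. -/
theorem fvs_rule_R7 {V : Type*} [Fintype V] [DecidableEq V]
    (G : SimpleGraph V) (k q : ℕ) (hk : 1 ≤ k) (hq : 0 < q)
    (v : Fin q → V) (hvinj : Function.Injective v)
    (hK : G.IsClique (Set.range v))
    (u : Fin 7 → V) (huinj : Function.Injective u)
    (huK : ∀ i, u i ∉ Set.range v)
    (hpath : ∀ i : Fin 6, G.Adj (u i.castSucc) (u i.succ))
    (hdeg2 : ∀ i : Fin 7, ∀ x : V,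
      (G.Adj (u i) x ∧ x ∉ Set.range v) ↔
        (∃ j : Fin 7, x = u j ∧ ((j : ℕ) = (i : ℕ) + 1 ∨ (i : ℕ) = (j : ℕ) + 1)))
    (hmono : ∀ i : Fin 7, ∃ qi : ℕ, 1 ≤ qi ∧ qi ≤ q ∧
      ∀ j : Fin q, (G.Adj (u i) (v j) ↔ (j : ℕ) < qi)) :
    (HasFVS G k ↔ HasFVS (delVert G (v ⟨0, hq⟩)) (k - 1)) ∧
    ∃ X : Finset V, v ⟨0, hq⟩ ∈ X ∧ IsFVS G X ∧
      ∀ Y : Finset V, IsFVS G Y → X.card ≤ Y.card := by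
  classical
  set v0 := v ⟨0, hq⟩ with hv0def
  have hadj0 : ∀ i, G.Adj (u i) v0 := by
    intro i
    obtain ⟨qi, hq1, _, h3⟩ := hmono i
    exact (h3 ⟨0, hq⟩).mpr (by simp; omega)
  have hne_uv : ∀ i x, u i ≠ v x := fun i x h => huK i ⟨x, h.symm⟩
  have hpath' : ∀ (i : ℕ) (h1 : i < 6),
      G.Adj (u ⟨i, by omega⟩) (u ⟨i + 1, by omega⟩) := fun i h1 => hpath ⟨i, h1⟩
  set Pf : Finset V := Finset.image u Finset.univ with hPfdef
  set Kf : Finset V := Finset.image v Finset.univ with hKfdef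
  have hmemPf : ∀ x, x ∈ Pf ↔ ∃ i, u i = x := by intro x; simp [hPfdef]
  have hmemKf : ∀ x, x ∈ Kf ↔ ∃ i, v i = x := by intro x; simp [hKfdef]
  -- triangle helper
  have tri : ∀ (Y : Finset V), IsFVS G Y → ∀ a b c : V, a ∉ Y → b ∉ Y → c ∉ Y →
      G.Adj a b → G.Adj b c → G.Adj c a → False := by
    intro Y hY a b c ha hb hc hab hbc hca
    exact R7Aux.no_triangle hY
      (show (G.induce ((↑Y : Set V)ᶜ)).Adj ⟨a, by simp [ha]⟩ ⟨b, by simp [hb]⟩ from hab)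
      (show (G.induce ((↑Y : Set V)ᶜ)).Adj ⟨b, by simp [hb]⟩ ⟨c, by simp [hc]⟩ from hbc)
      (show (G.induce ((↑Y : Set V)ᶜ)).Adj ⟨c, by simp [hc]⟩ ⟨a, by simp [ha]⟩ from hca)
  -- the key exchange lemma
  have key : ∀ Y : Finset V, IsFVS G Y → ∃ X : Finset V,
      v0 ∈ X ∧ IsFVS G X ∧ X.card ≤ Y.card := by
    intro Y hY
    by_cases hv0Y : v0 ∈ Y
    · exact ⟨Y, hv0Y, hY, le_rfl⟩
    set X : Finset V := (Y \ Pf) ∪ (Kf \ Y) with hXdef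
    have hKX : ∀ j, v j ∈ X := by
      intro j
      by_cases h : v j ∈ Y
      · refine Finset.mem_union_left _ (Finset.mem_sdiff.mpr ⟨h, fun hc => ?_⟩)
        obtain ⟨i, hi⟩ := (hmemPf _).mp hc
        exact hne_uv i j hi
      · exact Finset.mem_union_right _ (Finset.mem_sdiff.mpr ⟨(hmemKf _).mpr ⟨j, rfl⟩, h⟩)
    have hPX : ∀ i, u i ∉ X := by
      intro i hc
      rcases Finset.mem_union.mp hc with h | h
      · exact (Finset.mem_sdiff.mp h).2 ((hmemPf _).mpr ⟨i, rfl⟩)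
      · obtain ⟨j, hj⟩ := (hmemKf _).mp (Finset.mem_sdiff.mp h).1
        exact hne_uv i j hj.symm
    have hv0X : v0 ∈ X := hKX ⟨0, hq⟩
    -- X is an FVS
    have hXfvs : IsFVS G X := by
      have hset : ((↑X : Set V)ᶜ) = Set.range u ∪ (((↑X : Set V)ᶜ) \ Set.range u) := by
        ext z
        constructor
        · intro hz
          by_cases h : z ∈ Set.range u
          · exact Or.inl h
          · exact Or.inr ⟨hz, h⟩
        · rintro (⟨i, rfl⟩ | ⟨hz, _⟩)
          · simpa using hPX i
          · exact hz
      show (G.induce ((↑X : Set V)ᶜ)).IsAcyclic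
      rw [hset]
      apply R7Aux.induce_union_acyclic
      · -- no edges across
        rintro x ⟨i, rfl⟩ y hy hadj
        have hyv : y ∉ Set.range v := by
          rintro ⟨j, rfl⟩
          exact (by simpa using hy.1 : v j ∉ X) (hKX j)
        obtain ⟨j, hj, _⟩ := (hdeg2 i y).mp ⟨hadj, hyv⟩
        exact hy.2 ⟨j, hj.symm⟩
      · -- the path part is acyclic
        set e := Equiv.ofInjective u huinj with hedef
        have hu_e : ∀ x : Set.range u, u (e.symm x) = ↑x := fun x =>
          Equiv.apply_ofInjective_symm huinj x
        refine R7Aux.acyclic_of_injhom ⟨fun x => e.symm x, ?_⟩ ?_ (R7Aux.lineG_acyclic 7)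
        · intro a b hab
          have hadj : G.Adj (u (e.symm a)) (u (e.symm b)) := by
            rw [hu_e, hu_e]; exact hab
          obtain ⟨j', hj', hrel⟩ := (hdeg2 (e.symm a) (u (e.symm b))).mp ⟨hadj, huK _⟩
          have hjb : j' = e.symm b := huinj hj'.symm
          subst hjb
          show (R7Aux.lineG 7).Adj (e.symm a) (e.symm b)
          rw [R7Aux.lineG_adj]
          omega
        · intro a b hab
          exact e.symm.injective hab
      · -- the rest is acyclic
        refine R7Aux.isAcyclic_induce_mono (T := ((↑Y : Set V)ᶜ)) ?_ hY
        rintro z ⟨hzX, hzU⟩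
        simp only [Set.mem_compl_iff, Finset.mem_coe] at hzX ⊢
        intro hzY
        refine hzX (Finset.mem_union_left _ (Finset.mem_sdiff.mpr ⟨hzY, fun hc => ?_⟩))
        obtain ⟨i, hi⟩ := (hmemPf _).mp hc
        exact hzU ⟨i, hi⟩
    -- cardinality bounds
    have hK2 : (Kf \ Y).card ≤ 2 := by
      by_contra hcon
      have h3 : 2 < (Kf \ Y).card := by omega
      obtain ⟨a, b, c, ha, hb, hc, hab, hac, hbc⟩ := Finset.two_lt_card_iff.mp h3
      obtain ⟨haK, haY⟩ := Finset.mem_sdiff.mp ha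
      obtain ⟨hbK, hbY⟩ := Finset.mem_sdiff.mp hb
      obtain ⟨hcK, hcY⟩ := Finset.mem_sdiff.mp hc
      obtain ⟨ia, hia⟩ := (hmemKf _).mp haK
      obtain ⟨ib, hib⟩ := (hmemKf _).mp hbK
      obtain ⟨ic, hic⟩ := (hmemKf _).mp hcK
      have har : a ∈ Set.range v := ⟨ia, hia⟩
      have hbr : b ∈ Set.range v := ⟨ib, hib⟩
      have hcr : c ∈ Set.range v := ⟨ic, hic⟩
      exact tri Y hY a b c haY hbY hcY (hK har hbr hab) (hK hbr hcr hbc)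
        (hK hcr har hac.symm)
    have h01 : u ⟨0, by omega⟩ ∈ Y ∨ u ⟨1, by omega⟩ ∈ Y := by
      by_contra hcon
      push_neg at hcon
      exact tri Y hY v0 (u ⟨0, by omega⟩) (u ⟨1, by omega⟩) hv0Y hcon.1 hcon.2
        (hadj0 _).symm (hpath' 0 (by omega)) (hadj0 _)
    have h23 : u ⟨2, by omega⟩ ∈ Y ∨ u ⟨3, by omega⟩ ∈ Y := by
      by_contra hcon
      push_neg at hcon
      exact tri Y hY v0 (u ⟨2, by omega⟩) (u ⟨3, by omega⟩) hv0Y hcon.1 hcon.2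
        (hadj0 _).symm (hpath' 2 (by omega)) (hadj0 _)
    have hP2 : 2 ≤ (Y ∩ Pf).card := by
      obtain ⟨a, haY, haeq⟩ : ∃ a, a ∈ Y ∧
          (a = u ⟨0, by omega⟩ ∨ a = u ⟨1, by omega⟩) := by
        rcases h01 with h | h
        · exact ⟨_, h, Or.inl rfl⟩
        · exact ⟨_, h, Or.inr rfl⟩
      obtain ⟨b, hbY, hbeq⟩ : ∃ b, b ∈ Y ∧
          (b = u ⟨2, by omega⟩ ∨ b = u ⟨3, by omega⟩) := by
        rcases h23 with h | h
        · exact ⟨_, h, Or.inl rfl⟩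
        · exact ⟨_, h, Or.inr rfl⟩
      have humk : ∀ (i j : ℕ) (hi : i < 7) (hj : j < 7), i ≠ j →
          u ⟨i, hi⟩ ≠ u ⟨j, hj⟩ :=
        fun i j hi hj hne0 h => hne0 (congrArg Fin.val (huinj h))
      have hab : a ≠ b := by
        rcases haeq with rfl | rfl <;> rcases hbeq with rfl | rfl <;>
          exact humk _ _ _ _ (by omega)
      have hsub : ({a, b} : Finset V) ⊆ Y ∩ Pf := by
        intro z hz
        rcases Finset.mem_insert.mp hz with rfl | hz
        · refine Finset.mem_inter.mpr ⟨haY, ?_⟩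
          rcases haeq with rfl | rfl <;> exact (hmemPf _).mpr ⟨_, rfl⟩
        · rw [Finset.mem_singleton] at hz
          subst hz
          refine Finset.mem_inter.mpr ⟨hbY, ?_⟩
          rcases hbeq with rfl | rfl <;> exact (hmemPf _).mpr ⟨_, rfl⟩
      calc 2 = ({a, b} : Finset V).card := (Finset.card_pair hab).symm
        _ ≤ (Y ∩ Pf).card := Finset.card_le_card hsub
    have hcard1 : X.card ≤ (Y \ Pf).card + (Kf \ Y).card := Finset.card_union_le _ _
    have hcard2 : (Y \ Pf).card + (Y ∩ Pf).card = Y.card :=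
      Finset.card_sdiff_add_card_inter _ _
    exact ⟨X, hv0X, hXfvs, by omega⟩
  constructor
  · constructor
    · rintro ⟨Y, hYk, hY⟩
      obtain ⟨X, hv0X, hX, hXle⟩ := key Y hY
      refine ⟨X.subtype (· ≠ v0), ?_, ?_⟩
      · have h1 : (X.subtype (· ≠ v0)).card = (X.erase v0).card := by
          rw [Finset.card_subtype, Finset.filter_ne']
        have h2 := Finset.card_erase_of_mem hv0X
        have h3 : 1 ≤ X.card := Finset.card_pos.mpr ⟨v0, hv0X⟩
        omega
      · refine R7Aux.acyclic_of_injhom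
          ⟨fun a => ⟨(a : {x : V // x ≠ v0}), by
            have h2 := a.2
            simp only [Set.mem_compl_iff, Finset.mem_coe, Finset.mem_subtype] at h2
            simpa using h2⟩, ?_⟩ ?_ hX
        · intro a b hab
          exact hab
        · intro a b hab
          have h1 := congrArg Subtype.val hab
          exact Subtype.ext (Subtype.ext h1)
    · rintro ⟨X', hX'k, hX'⟩
      set X : Finset V := insert v0 (X'.image Subtype.val) with hXdef
      refine ⟨X, ?_, ?_⟩
      · have h1 : X.card ≤ (X'.image Subtype.val).card + 1 := Finset.card_insert_le _ _
        have h2 : (X'.image Subtype.val).card ≤ X'.card := Finset.card_image_le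
        omega
      · refine R7Aux.acyclic_of_injhom
          ⟨fun a => ⟨⟨(a : V), fun h => (by
              have h2 := a.2
              rw [Set.mem_compl_iff, Finset.mem_coe] at h2
              exact h2 : (a : V) ∉ X)
              (h ▸ Finset.mem_insert_self v0 _)⟩, by
            have h2 : (a : V) ∉ X := by
              have h3 := a.2
              rwa [Set.mem_compl_iff, Finset.mem_coe] at h3
            simp only [Set.mem_compl_iff, Finset.mem_coe]
            intro hc
            exact h2 (Finset.mem_insert.mpr (Or.inr
              (Finset.mem_image.mpr ⟨_, hc, rfl⟩)))⟩, ?_⟩ ?_ hX'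
        · intro a b hab
          exact hab
        · intro a b hab
          have h1 := congrArg Subtype.val hab
          have h2 := congrArg Subtype.val h1
          exact Subtype.ext h2
  · have hUniv : IsFVS G Finset.univ := by
      intro a c hc
      exact absurd a.2 (by simp)
    have hex : ∃ n : ℕ, ∃ Y : Finset V, IsFVS G Y ∧ Y.card = n :=
      ⟨_, Finset.univ, hUniv, rfl⟩
    obtain ⟨Y, hY, hYcard⟩ := Nat.find_spec hex
    obtain ⟨X, hv0X, hX, hXle⟩ := key Y hY
    refine ⟨X, hv0X, hX, ?_⟩
    intro Z hZ
    have hmin := Nat.find_min' hex ⟨Z, hZ, rfl⟩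
    omega
end

section
/- Let T be a tree with at least two vertices in which every leaf is adjacent (in an ambient graph G) to a fixed vertex v₁ outside T, and suppose V(T) ∪ {v₁,…,v_q} spans a subgraph of G where K = {v₁,…,v_q} is a clique and every vertex u of T has N_G(u) ⊆ K ∪ V(T) with N_G(u) ∩ K a non-empty prefix {v₁,…,v_{q_u}}. Then G has a feedback vertex set of size at most k if and only if G − v₁ has a feedback vertex set of size at most k − 1. -/
open SimpleGraph

set_option linter.unusedSectionVars false

section helpers

variable {V : Type*} [DecidableEq V] {G : SimpleGraph V}

lemma lift_walk {W : Type*} (f : W → V) (hf : Function.Injective f) :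
    ∀ {u w : V} (p : G.Walk u w) (a b : W) (ha : f a = u) (hb : f b = w),
      (∀ x ∈ p.support, x ∈ Set.range f) →
      ∃ q : (G.comap f).Walk a b,
        q.map (SimpleGraph.Hom.comap f G) = p.copy ha.symm hb.symm := by
  intro u w p
  induction p with
  | nil =>
    intro a b ha hb _
    have hab : a = b := hf (by rw [ha, hb])
    subst hab; subst ha
    exact ⟨Walk.nil, rfl⟩
  | @cons u u' w h p' ih =>
    intro a b ha hb hs
    obtain ⟨a', ha'⟩ := hs u' (by simp)
    subst ha'
    obtain ⟨q', hq'⟩ := ih a' b rfl hb (fun x hx => hs x (by simp [hx]))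
    refine ⟨Walk.cons (show (G.comap f).Adj a a' by
      show G.Adj (f a) (f a'); rw [ha]; exact h) q', ?_⟩
    rw [Walk.map_cons, hq', Walk.copy_cons]
    rfl

lemma comap_isAcyclic_iff {W : Type*} (f : W → V) (hf : Function.Injective f) :
    (G.comap f).IsAcyclic ↔
      ∀ ⦃u : V⦄ (c : G.Walk u u), c.IsCycle →
        ¬ (∀ x ∈ c.support, x ∈ Set.range f) := by
  have hhom : Function.Injective (SimpleGraph.Hom.comap f G) := hf
  constructor
  · intro hac u c hc hsup
    obtain ⟨a, ha⟩ := hsup u c.start_mem_support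
    obtain ⟨q, hq⟩ := lift_walk f hf c a a ha ha hsup
    refine hac q ?_
    have hmc : (q.map (SimpleGraph.Hom.comap f G)).IsCycle := by
      rw [hq]
      exact (Walk.isCycle_copy _ _).mpr hc
    exact (Walk.map_isCycle_iff_of_injective hhom).mp hmc
  · intro h a q hq
    refine h (q.map (SimpleGraph.Hom.comap f G)) (hq.map hhom) ?_
    intro x hx
    rw [Walk.support_map, List.mem_map] at hx
    obtain ⟨y, _, rfl⟩ := hx
    exact ⟨y, rfl⟩

variable [Fintype V]

lemma isFVS_iff (X : Finset V) :
    IsFVS G X ↔ ∀ ⦃u : V⦄ (c : G.Walk u u), c.IsCycle → ∃ x ∈ c.support, x ∈ X := by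
  unfold IsFVS
  rw [show G.induce ((↑X : Set V)ᶜ) = G.comap _ from rfl,
    comap_isAcyclic_iff _ (Function.Embedding.subtype _).injective]
  refine forall_congr' fun u => forall_congr' fun c => imp_congr_right fun _ => ?_
  rw [not_forall]
  constructor
  · rintro ⟨x, hx⟩
    rw [Classical.not_imp] at hx
    refine ⟨x, hx.1, ?_⟩
    by_contra hxX
    exact hx.2 ⟨⟨x, by simpa using hxX⟩, rfl⟩
  · rintro ⟨x, hxs, hxX⟩
    refine ⟨x, ?_⟩
    rw [Classical.not_imp]
    refine ⟨hxs, ?_⟩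
    rintro ⟨⟨y, hy⟩, rfl⟩
    exact hy (by simpa using hxX)

lemma isFVS_delVert_iff (u₀ : V) (Y : Finset {x : V // x ≠ u₀}) :
    IsFVS (delVert G u₀) Y ↔
      ∀ ⦃u : V⦄ (c : G.Walk u u), c.IsCycle →
        ∃ x ∈ c.support, x = u₀ ∨ ∃ h : x ≠ u₀, (⟨x, h⟩ : {x : V // x ≠ u₀}) ∈ Y := by
  unfold IsFVS delVert
  rw [show (G.comap Subtype.val).induce ((↑Y : Set {x : V // x ≠ u₀})ᶜ)
      = (G.comap Subtype.val).comap _ from rfl, comap_comap,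
    comap_isAcyclic_iff _ (Subtype.val_injective.comp (Function.Embedding.subtype _).injective)]
  refine forall_congr' fun u => forall_congr' fun c => imp_congr_right fun _ => ?_
  rw [not_forall]
  constructor
  · rintro ⟨x, hx⟩
    rw [Classical.not_imp] at hx
    refine ⟨x, hx.1, ?_⟩
    by_contra hxX
    push_neg at hxX
    exact hx.2 ⟨⟨⟨x, hxX.1⟩, by simpa using hxX.2 hxX.1⟩, rfl⟩
  · rintro ⟨x, hxs, hxX⟩
    refine ⟨x, ?_⟩
    rw [Classical.not_imp]
    refine ⟨hxs, ?_⟩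
    rintro ⟨⟨⟨y, hy0⟩, hy⟩, rfl⟩
    rcases hxX with h | ⟨h, hmem⟩
    · exact hy0 h
    · exact hy (by simpa using hmem)

lemma triangle_hit {P : V → Prop}
    (hit : ∀ ⦃u : V⦄ (c : G.Walk u u), c.IsCycle → ∃ x ∈ c.support, P x)
    {a b c : V} (hab : G.Adj a b) (hbc : G.Adj b c) (hca : G.Adj c a) :
    P a ∨ P b ∨ P c := by
  have hab' : a ≠ b := hab.ne
  have hbc' : b ≠ c := hbc.ne
  have hca' : c ≠ a := hca.ne
  have hac : a ≠ c := fun h => hca' h.symm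
  have hcyc : (Walk.cons hab (Walk.cons hbc (Walk.cons hca Walk.nil))).IsCycle := by
    rw [Walk.cons_isCycle_iff]
    constructor
    · rw [Walk.isPath_def]
      simp [hab.ne', hbc', hca', hac.symm, hac, hbc.ne', hca.ne']
    · simp only [Walk.edges_cons, Walk.edges_nil, List.mem_cons, List.not_mem_nil, or_false]
      rintro (h | h) <;> rw [Sym2.eq_iff] at h <;>
        rcases h with ⟨h1, h2⟩ | ⟨h1, h2⟩ <;> simp_all
  obtain ⟨x, hx, hPx⟩ := hit _ hcyc
  simp only [Walk.support_cons, Walk.support_nil, List.mem_cons, List.not_mem_nil, or_false] at hx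
  rcases hx with rfl | rfl | rfl | rfl
  · exact .inl hPx
  · exact .inr (.inl hPx)
  · exact .inr (.inr hPx)
  · exact .inl hPx

lemma walk_reach {T Kv : Set V}
    (hcl : ∀ z ∈ T, ∀ y, G.Adj z y → y ∈ Kv ∪ T) :
    ∀ {u w : V} (p : G.Walk u w), w ∈ T → u ∈ T ∨ ∃ z ∈ p.support, z ∈ Kv := by
  intro u w p hw
  induction p with
  | nil => exact .inl hw
  | cons h q ih =>
    rcases ih hw with hT | ⟨z, hz, hzK⟩
    · rcases hcl _ hT _ h.symm with hKv | hT'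
      · exact .inr ⟨_, Walk.start_mem_support _, hKv⟩
      · exact .inl hT'
    · exact .inr ⟨z, by simp [hz], hzK⟩

lemma mem_support_of_closed {z x : V} {d : G.Walk z z} (hd : ¬d.Nil) :
    x ∈ d.support ↔ x ∈ d.support.tail := by
  cases d with
  | nil => simp at hd
  | cons h q =>
    simp only [Walk.support_cons, List.mem_cons, List.tail_cons]
    constructor
    · rintro (rfl | hx)
      · exact q.end_mem_support
      · exact hx
    · exact fun hx => .inr hx

lemma mem_support_rotate {z u x : V} {c : G.Walk z z} (hc : c.IsCycle) (h : u ∈ c.support) :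
    x ∈ (c.rotate u h).support ↔ x ∈ c.support := by
  have hrot := Walk.support_rotate c u h
  rw [mem_support_of_closed (hc.rotate h).not_nil, mem_support_of_closed hc.not_nil]
  exact hrot.perm.mem_iff

lemma main_step {q : ℕ} (hq : 0 < q)
    (v : Fin q → V) (hK : G.IsClique (Set.range v))
    (T : Finset V)
    (hTK : ∀ x ∈ T, x ∉ Set.range v)
    (hac : (G.induce (↑T : Set V)).IsAcyclic)
    (hnbrs : ∀ x ∈ T, G.neighborSet x ⊆ Set.range v ∪ ↑T)
    (hadj0 : ∀ x ∈ T, G.Adj x (v ⟨0, hq⟩))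
    (X : Finset V)
    (hXhit : ∀ ⦃u : V⦄ (c : G.Walk u u), c.IsCycle → ∃ x ∈ c.support, x ∈ X)
    (hv0 : v ⟨0, hq⟩ ∉ X) (w : V) (hwT : w ∈ T) :
    ∀ ⦃u : V⦄ (c : G.Walk u u), c.IsCycle →
      ∃ x ∈ c.support, x ∈ insert (v ⟨0, hq⟩) (X.erase w) := by
  intro u c hc
  by_contra hcon
  push_neg at hcon
  set v₀ := v ⟨0, hq⟩ with hv₀def
  have hs : ∀ x ∈ c.support, x ≠ v₀ ∧ (x ∈ X → x = w) := by
    intro x hx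
    have h' := hcon x hx
    simp only [Finset.mem_insert, Finset.mem_erase, not_or, not_and] at h'
    exact ⟨h'.1, fun hxX => by
      by_contra hne
      exact h'.2 hne hxX⟩
  have hwS : w ∈ c.support := by
    obtain ⟨x, hx, hxX⟩ := hXhit c hc
    exact ((hs x hx).2 hxX) ▸ hx
  have hKadj : ∀ a b : V, a ∈ Set.range v → b ∈ Set.range v → a ≠ b → G.Adj a b :=
    fun a b ha hb hne => hK ha hb hne
  have hXT : ∀ x, x ∈ c.support → x ∈ Set.range v → x ∉ X := by
    intro x hx hxR hxX
    exact hTK w hwT (((hs x hx).2 hxX) ▸ hxR)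
  have hv₀R : v₀ ∈ Set.range v := ⟨_, rfl⟩
  have hwT' : w ∈ (↑T : Set V) := hwT
  have hcl : ∀ z ∈ (↑T : Set V), ∀ y, G.Adj z y → y ∈ Set.range v ∪ ↑T :=
    fun z hz y hy => hnbrs z hz hy
  by_cases h2K : ∃ a ∈ c.support, ∃ b ∈ c.support, a ∈ Set.range v ∧ b ∈ Set.range v ∧ a ≠ b
  · obtain ⟨a, haS, b, hbS, haR, hbR, hab⟩ := h2K
    have t1 : G.Adj v₀ a := hKadj _ _ hv₀R haR (fun h => (hs a haS).1 h.symm)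
    have t2 : G.Adj a b := hKadj _ _ haR hbR hab
    have t3 : G.Adj b v₀ := hKadj _ _ hbR hv₀R (hs b hbS).1
    rcases triangle_hit hXhit t1 t2 t3 with h | h | h
    · exact hv0 h
    · exact hXT a haS haR h
    · exact hXT b hbS hbR h
  · push_neg at h2K
    by_cases hexK : ∃ a ∈ c.support, a ∈ Set.range v
    case neg =>
      have hsubT : ∀ x ∈ c.support, x ∈ (↑T : Set V) := by
        intro x hx
        have hx' : x ∈ (c.rotate w hwS).support := (mem_support_rotate hc hwS).mpr hx
        rcases walk_reach hcl ((c.rotate w hwS).dropUntil x hx') hwT' with hT | ⟨z, hz, hzR⟩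
        · exact hT
        · exact absurd ⟨z, (mem_support_rotate hc hwS).mp
            (Walk.support_dropUntil_subset _ hx' hz), hzR⟩ hexK
      exact (comap_isAcyclic_iff _ (Function.Embedding.subtype _).injective).mp hac c hc
        (fun x hx => ⟨⟨x, hsubT x hx⟩, rfl⟩)
    case pos =>
      obtain ⟨a, haS, haR⟩ := hexK
      have ha_ne_v0 : a ≠ v₀ := (hs a haS).1
      have haT : a ∉ (↑T : Set V) := fun h => hTK a h haR
      have haX : a ∉ X := hXT a haS haR
      obtain ⟨c', hc', hmemc'⟩ : ∃ c' : G.Walk a a, c'.IsCycle ∧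
          ∀ x, (x ∈ c'.support ↔ x ∈ c.support) :=
        ⟨c.rotate a haS, hc.rotate haS, fun x => mem_support_rotate hc haS⟩
      cases c' with
      | nil => exact hc'.ne_nil rfl
      | @cons _ m₁ _ h₁ p =>
        rw [Walk.cons_isCycle_iff] at hc'
        obtain ⟨hp, hedge⟩ := hc'
        have hnodup : p.support.Nodup := hp.support_nodup
        have hw_ne_a : w ≠ a := fun h => haT (h ▸ hwT')
        have hwp : w ∈ p.support := by
          have hw' := (hmemc' w).mpr hwS
          rw [Walk.support_cons, List.mem_cons] at hw'
          exact hw'.resolve_left hw_ne_a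
        have hSsub : ∀ x ∈ p.support, x ∈ c.support := fun x hx =>
          (hmemc' x).mp (by rw [Walk.support_cons]; exact List.mem_cons_of_mem _ hx)
        have huniqa : ∀ z ∈ p.support, z ∈ Set.range v → z = a := fun z hz hzR =>
          h2K z (hSsub z hz) a haS hzR haR
        have hm₁S : m₁ ∈ p.support := p.start_mem_support
        have hanotin : a ∉ (p.takeUntil w hwp).support := by
          have happ : p.support
              = (p.takeUntil w hwp).support ++ (p.dropUntil w hwp).support.tail := by
            rw [← Walk.support_append, p.take_spec hwp]
          have hatail : a ∈ (p.dropUntil w hwp).support.tail := by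
            have hmem : a ∈ (p.dropUntil w hwp).support := Walk.end_mem_support _
            rw [Walk.support_eq_cons] at hmem
            exact (List.mem_cons.mp hmem).resolve_left (fun h => hw_ne_a h.symm)
          intro hmem
          rw [happ] at hnodup
          exact (List.disjoint_of_nodup_append hnodup) hmem hatail
        have hm₁T : m₁ ∈ (↑T : Set V) := by
          rcases walk_reach hcl (p.takeUntil w hwp) hwT' with hT | ⟨z, hz, hzR⟩
          · exact hT
          · exact absurd ((huniqa z (Walk.support_takeUntil_subset _ hwp hz) hzR) ▸ hz)
              hanotin
        have ham₁ : a ≠ m₁ := h₁.ne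
        obtain ⟨m₂, h₂, r, hrev⟩ := Walk.exists_eq_cons_of_ne ham₁ p.reverse
        have hrs : p.reverse.support = a :: r.support := by rw [hrev, Walk.support_cons]
        have hm₂p : m₂ ∈ p.support := by
          have hmem : m₂ ∈ p.reverse.support := by
            rw [hrs]; exact List.mem_cons_of_mem _ r.start_mem_support
          rwa [Walk.support_reverse, List.mem_reverse] at hmem
        have hrnodup : (a :: r.support).Nodup := by
          rw [← hrs, Walk.support_reverse]; exact List.nodup_reverse.mpr hnodup
        have hanotr : a ∉ r.support := (List.nodup_cons.mp hrnodup).1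
        have hrsub : ∀ x ∈ r.support, x ∈ p.support := by
          intro x hx
          have hmem : x ∈ p.reverse.support := by
            rw [hrs]; exact List.mem_cons_of_mem _ hx
          rwa [Walk.support_reverse, List.mem_reverse] at hmem
        have hm₂T : m₂ ∈ (↑T : Set V) := by
          rcases walk_reach hcl r hm₁T with hT | ⟨z, hz, hzR⟩
          · exact hT
          · exact absurd ((huniqa z (hrsub z hz) hzR) ▸ hz) hanotr
        have hm₁₂ : m₁ ≠ m₂ := by
          intro hEq
          apply hedge
          have hmem : s(a, m₂) ∈ p.reverse.edges := by
            rw [hrev, Walk.edges_cons]; exact List.mem_cons_self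
          rw [Walk.edges_reverse, List.mem_reverse] at hmem
          subst hEq
          exact hmem
        obtain ⟨x, hxT, hxS, hxw, hax⟩ :
            ∃ x, x ∈ (↑T : Set V) ∧ x ∈ c.support ∧ x ≠ w ∧ G.Adj a x := by
          by_cases hm : m₁ = w
          · exact ⟨m₂, hm₂T, hSsub m₂ hm₂p, fun h => hm₁₂ (hm.trans h.symm), h₂⟩
          · exact ⟨m₁, hm₁T, hSsub m₁ hm₁S, hm, h₁⟩
        have hxX : x ∉ X := fun h => hxw ((hs x hxS).2 h)
        have t1 : G.Adj v₀ a := hKadj _ _ hv₀R haR (Ne.symm ha_ne_v0)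
        have t3 : G.Adj x v₀ := hadj0 x hxT
        rcases triangle_hit hXhit t1 hax t3 with h | h | h
        · exact hv0 h
        · exact haX h
        · exact hxX h

end helpers

/-- Safeness of rule (R4): given a clique `K = {v 0, …, v (q-1)}` and a tree `T` of
`G - K` with at least two vertices, all of whose vertices have `K`-monotone
neighborhoods given by non-empty prefixes (so in particular every leaf of `T` is
adjacent to `v 0`), the vertex `v 0` can be forced into the solution. -/
theorem fvs_rule_R4 {V : Type*} [Fintype V] [DecidableEq V]
    (G : SimpleGraph V) (k q : ℕ) (hk : 1 ≤ k) (hq : 0 < q)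
    (v : Fin q → V) (hvinj : Function.Injective v)
    (hK : G.IsClique (Set.range v))
    (T : Finset V) (hT2 : 2 ≤ T.card)
    (hTK : ∀ x ∈ T, x ∉ Set.range v)
    (htree : (G.induce (↑T : Set V)).IsTree)
    (hnbrs : ∀ x ∈ T, G.neighborSet x ⊆ Set.range v ∪ ↑T)
    (hmono : ∀ x ∈ T, ∃ qx : ℕ, 1 ≤ qx ∧ qx ≤ q ∧
      ∀ i : Fin q, (G.Adj x (v i) ↔ (i : ℕ) < qx))
    (hleaf : ∀ x ∈ T, ((↑T : Set V) ∩ G.neighborSet x).Subsingleton →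
      G.Adj x (v ⟨0, hq⟩)) :
    HasFVS G k ↔ HasFVS (delVert G (v ⟨0, hq⟩)) (k - 1) := by
  set v₀ := v ⟨0, hq⟩ with hv₀def
  have hadj0 : ∀ x ∈ T, G.Adj x v₀ := by
    intro x hx
    obtain ⟨qx, h1, _, hiff⟩ := hmono x hx
    exact (hiff ⟨0, hq⟩).mpr (by show 0 < qx; omega)
  have hv₀R : v₀ ∈ Set.range v := ⟨_, rfl⟩
  constructor
  · rintro ⟨X, hXcard, hXfvs⟩
    have hXhit := (isFVS_iff X).mp hXfvs
    obtain ⟨X', hX'card, hv₀X', hX'hit⟩ :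
        ∃ X' : Finset V, X'.card ≤ k ∧ v₀ ∈ X' ∧
          ∀ ⦃u : V⦄ (c : G.Walk u u), c.IsCycle → ∃ x ∈ c.support, x ∈ X' := by
      by_cases hvX : v₀ ∈ X
      · exact ⟨X, hXcard, hvX, hXhit⟩
      · -- find an edge of `T`, giving a triangle with `v₀`, hence `X ∩ T ≠ ∅`
        obtain ⟨x, hxT, y, hyT, hxyadj⟩ :
            ∃ x, x ∈ T ∧ ∃ y, y ∈ T ∧ G.Adj x y := by
          obtain ⟨x, hx, y, hy, hne⟩ := Finset.one_lt_card.mp hT2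
          have hx' : x ∈ (↑T : Set V) := hx
          have hy' : y ∈ (↑T : Set V) := hy
          obtain ⟨wk⟩ := htree.isConnected.preconnected ⟨x, hx'⟩ ⟨y, hy'⟩
          obtain ⟨m, hadjm, _, _⟩ := Walk.exists_eq_cons_of_ne
            (by simpa [Subtype.ext_iff] using hne) wk
          exact ⟨x, hx, m.1, m.2, hadjm⟩
        have t2 : G.Adj y v₀ := hadj0 y hyT
        have t3 : G.Adj v₀ x := (hadj0 x hxT).symm
        obtain ⟨w, hwT, hwX⟩ : ∃ w, w ∈ T ∧ w ∈ X := by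
          rcases triangle_hit hXhit hxyadj t2 t3 with h | h | h
          · exact ⟨x, hxT, h⟩
          · exact ⟨y, hyT, h⟩
          · exact absurd h hvX
        refine ⟨insert v₀ (X.erase w), ?_, Finset.mem_insert_self _ _,
          main_step hq v hK T hTK htree.IsAcyclic hnbrs hadj0 X hXhit hvX w hwT⟩
        have h1 : (X.erase w).card = X.card - 1 := Finset.card_erase_of_mem hwX
        have h2 : 1 ≤ X.card := Finset.card_pos.mpr ⟨w, hwX⟩
        calc (insert v₀ (X.erase w)).card ≤ (X.erase w).card + 1 := Finset.card_insert_le _ _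
          _ ≤ k := by omega
    refine ⟨X'.subtype (· ≠ v₀), ?_, ?_⟩
    · rw [Finset.card_subtype, Finset.filter_ne', Finset.card_erase_of_mem hv₀X']
      omega
    · rw [isFVS_delVert_iff]
      intro u c hcyc
      obtain ⟨x, hx, hxX'⟩ := hX'hit c hcyc
      by_cases hxv : x = v₀
      · exact ⟨x, hx, .inl hxv⟩
      · exact ⟨x, hx, .inr ⟨hxv, by simpa [Finset.mem_subtype] using hxX'⟩⟩
  · rintro ⟨Y, hYcard, hYfvs⟩
    have hYhit := (isFVS_delVert_iff v₀ Y).mp hYfvs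
    refine ⟨insert v₀ (Y.map ⟨Subtype.val, Subtype.val_injective⟩), ?_, ?_⟩
    · refine le_trans (Finset.card_insert_le _ _) ?_
      rw [Finset.card_map]
      omega
    · rw [isFVS_iff]
      intro u c hcyc
      obtain ⟨x, hx, hxcond⟩ := hYhit c hcyc
      refine ⟨x, hx, ?_⟩
      rcases hxcond with rfl | ⟨hne, hmem⟩
      · exact Finset.mem_insert_self _ _
      · exact Finset.mem_insert_of_mem (Finset.mem_map.mpr ⟨⟨x, hne⟩, hmem, rfl⟩)
end

section
/- Let G be a planar graph, T a subtree of G rooted at r, and P_i, P_j two further vertices of G. Suppose u, v, w are three pairwise incomparable vertices of T (no one lies in the rooted subtree of another), each distinct from r, such that each of the rooted subtrees T_u, T_v, T_w contains a vertex adjacent to P_i and a vertex adjacent to P_j, and the remainder T − T_u − T_v − T_w is connected and contains r. Then contracting T_u, T_v, T_w and T − T_u − T_v − T_w to single vertices yields a K_{3,3} minor in G — a contradiction. Hence no such configuration exists in a planar graph. -/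
open SimpleGraph

/-- `H` is a minor of `G`. -/
def IsMinor {W V : Type*} (H : SimpleGraph W) (G : SimpleGraph V) : Prop :=
  ∃ φ : W → Set V,
    (∀ w, (φ w).Nonempty) ∧
    (∀ w, (G.induce (φ w)).Connected) ∧
    (Pairwise fun w w' => Disjoint (φ w) (φ w')) ∧
    ∀ ⦃w w'⦄, H.Adj w w' → ∃ a ∈ φ w, ∃ b ∈ φ w', G.Adj a b

/-- Planarity, via Wagner's characterization: no `K₅` and no `K₃,₃` minor. -/
def Planar {V : Type*} (G : SimpleGraph V) : Prop :=
  ¬ IsMinor (completeGraph (Fin 5)) G ∧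
  ¬ IsMinor (completeBipartiteGraph (Fin 3) (Fin 3)) G

lemma singleton_induce_connected {V : Type*} (G : SimpleGraph V) (v : V) :
    (G.induce ({v} : Set V)).Connected := by
  have : Subsingleton ({v} : Set V) := by
    constructor; rintro ⟨a, ha⟩ ⟨b, hb⟩
    simp only [Set.mem_singleton_iff] at ha hb; subst ha; subst hb; rfl
  have : Nonempty ({v} : Set V) := ⟨⟨v, rfl⟩⟩
  exact ⟨fun a b => by rw [Subsingleton.elim a b]⟩

/-- In a planar graph there is no configuration consisting of three disjoint connected
subtrees `A 0`, `A 1`, `A 2`, a connected remainder `R`, and two further vertices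
`Pi ≠ Pj`, where each `A m` is attached to `Pi`, to `Pj`, and to `R`: contracting the
branch sets would yield a `K₃,₃` minor. -/
theorem no_K33_configuration_in_planar {V : Type*} (G : SimpleGraph V)
    (hG : Planar G)
    (A : Fin 3 → Set V) (R : Set V) (Pi Pj : V) (hPij : Pi ≠ Pj)
    (hAne : ∀ m, (A m).Nonempty) (hRne : R.Nonempty)
    (hAconn : ∀ m, (G.induce (A m)).Connected)
    (hRconn : (G.induce R).Connected)
    (hAdisj : Pairwise fun m m' => Disjoint (A m) (A m'))
    (hAR : ∀ m, Disjoint (A m) R)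
    (hPiA : ∀ m, Pi ∉ A m) (hPjA : ∀ m, Pj ∉ A m)
    (hPiR : Pi ∉ R) (hPjR : Pj ∉ R)
    (hadji : ∀ m, ∃ a ∈ A m, G.Adj a Pi)
    (hadjj : ∀ m, ∃ a ∈ A m, G.Adj a Pj)
    (hadjR : ∀ m, ∃ a ∈ A m, ∃ b ∈ R, G.Adj a b) :
    False := by
  apply hG.2
  set B : Fin 3 → Set V := ![{Pi}, {Pj}, R] with hB
  have hBne : ∀ n, (B n).Nonempty := by
    intro n; fin_cases n
    · exact ⟨Pi, rfl⟩
    · exact ⟨Pj, rfl⟩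
    · exact hRne
  have hBconn : ∀ n, (G.induce (B n)).Connected := by
    intro n; fin_cases n
    · exact singleton_induce_connected G Pi
    · exact singleton_induce_connected G Pj
    · exact hRconn
  have hAB : ∀ m n, Disjoint (A m) (B n) := by
    intro m n; fin_cases n
    · simpa [B, Set.disjoint_singleton_right] using hPiA m
    · simpa [B, Set.disjoint_singleton_right] using hPjA m
    · exact hAR m
  have hBB : ∀ n n', n ≠ n' → Disjoint (B n) (B n') := by
    intro n n' h
    fin_cases n <;> fin_cases n' <;>
      simp_all [Set.disjoint_singleton_right, Set.disjoint_singleton_left, B, Ne.symm hPij]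
  have hABadj : ∀ m n, ∃ a ∈ A m, ∃ b ∈ B n, G.Adj a b := by
    intro m n; fin_cases n
    · obtain ⟨a, ha, h⟩ := hadji m; exact ⟨a, ha, Pi, rfl, h⟩
    · obtain ⟨a, ha, h⟩ := hadjj m; exact ⟨a, ha, Pj, rfl, h⟩
    · exact hadjR m
  refine ⟨Sum.elim A B, ?_, ?_, ?_, ?_⟩
  · rintro (m | n); exacts [hAne m, hBne n]
  · rintro (m | n); exacts [hAconn m, hBconn n]
  · rintro (m | n) (m' | n') h
    · exact hAdisj (fun e => h (by rw [e]))
    · exact hAB m n'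
    · exact (hAB m' n).symm
    · exact hBB n n' (fun e => h (by rw [e]))
  · rintro (m | n) (m' | n') h
    · simp at h
    · exact hABadj m n'
    · obtain ⟨a, ha, b, hb, hab⟩ := hABadj m' n
      exact ⟨b, hb, a, ha, hab.symm⟩
    · simp at h
end

section
/- Let G be a graph, k ≥ 0, K a clique in G, r a vertex of G − K, and a, b, c three distinct pairwise non-adjacent vertices each adjacent to r, each with all remaining neighbors inside K, where N(a) ∩ K, N(b) ∩ K, N(c) ∩ K are prefixes {v₁,…,v_{q_a}}, {v₁,…,v_{q_b}}, {v₁,…,v_{q_c}} of a fixed ordering (v₁,…,v_q) of K with 1 ≤ q_a ≤ q_b ≤ q_c. Then G has a feedback vertex set of size at most k if and only if G − a has a feedback vertex set of size at most k. -/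
open SimpleGraph

section R6Aux

variable {V : Type*} {W : Type*}

/-- The spanning subgraph of `G` keeping only the edges inside `s`. -/
def R6RS (G : SimpleGraph V) (s : Set V) : SimpleGraph V where
  Adj x y := G.Adj x y ∧ x ∈ s ∧ y ∈ s
  symm := ⟨fun _ _ ⟨h, hx, hy⟩ => ⟨h.symm, hy, hx⟩⟩
  loopless := ⟨fun x ⟨h, _, _⟩ => G.loopless.irrefl x h⟩

lemma R6RS_le {G : SimpleGraph V} {s : Set V} : R6RS G s ≤ G := fun _ _ h => h.1

lemma R6RS_mono {G : SimpleGraph V} {s t : Set V} (h : s ⊆ t) : R6RS G s ≤ R6RS G t :=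
  fun _ _ ⟨ha, hx, hy⟩ => ⟨ha, h hx, h hy⟩

lemma R6RS_congr {G : SimpleGraph V} {s t : Set V} (h : ∀ z, z ∈ s ↔ z ∈ t) :
    R6RS G s = R6RS G t := by
  have : s = t := Set.ext h
  rw [this]

lemma R6RS_RS {G : SimpleGraph V} {s t : Set V} :
    R6RS (R6RS G s) t = R6RS G (s ∩ t) := by
  ext x y
  constructor
  · rintro ⟨⟨h, hx, hy⟩, ht, ht'⟩
    exact ⟨h, ⟨hx, ht⟩, ⟨hy, ht'⟩⟩
  · rintro ⟨h, ⟨hx, ht⟩, hy, ht'⟩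
    exact ⟨⟨h, hx, hy⟩, ht, ht'⟩

lemma R6acyclic_of_le {G H : SimpleGraph V} (hle : H ≤ G) (hG : G.IsAcyclic) :
    H.IsAcyclic := by
  intro v c hc
  exact hG (c.transfer G (fun e he => edgeSet_mono hle (c.edges_subset_edgeSet he)))
    (hc.transfer _)

lemma R6RS_walk_support {G : SimpleGraph V} {s : Set V} :
    ∀ {x y : V} (p : (R6RS G s).Walk x y), x ∈ s → ∀ z ∈ p.support, z ∈ s := by
  intro x y p
  induction p with
  | nil =>
    intro hx z hz
    rw [Walk.support_nil, List.mem_singleton] at hz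
    exact hz ▸ hx
  | cons h q ih =>
    intro hx z hz
    rw [Walk.support_cons, List.mem_cons] at hz
    rcases hz with rfl | hz
    · exact hx
    · exact ih h.2.2 z hz

/-- In an acyclic graph, two distinct neighbors of `m` are not reachable avoiding `m`. -/
lemma R6peel_forward [DecidableEq V] {H : SimpleGraph V} (hH : H.IsAcyclic) {m x y : V}
    (hx : H.Adj m x) (hy : H.Adj m y) (hxy : x ≠ y)
    (hre : (R6RS H {m}ᶜ).Reachable x y) : False := by
  obtain ⟨w⟩ := hre
  let p := w.toPath
  have hxm : x ∈ ({m}ᶜ : Set V) := fun h => (hx.ne' h).elim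
  have hsupp : ∀ z ∈ (p : (R6RS H {m}ᶜ).Walk x y).support, z ≠ m :=
    fun z hz => R6RS_walk_support _ hxm z hz
  have hedges : ∀ e ∈ (p : (R6RS H {m}ᶜ).Walk x y).edges, e ∈ H.edgeSet :=
    fun e he =>
      edgeSet_mono R6RS_le ((p : (R6RS H {m}ᶜ).Walk x y).edges_subset_edgeSet he)
  set p' : H.Walk x y := (p : (R6RS H {m}ᶜ).Walk x y).transfer H hedges with hp'
  have hp'path : p'.IsPath := p.2.transfer _
  have hp'supp : ∀ z ∈ p'.support, z ≠ m := by
    rw [hp', Walk.support_transfer]; exact hsupp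
  have hmp' : m ∉ p'.support := fun h => hp'supp m h rfl
  have hq : (p'.concat (hy.symm : H.Adj y m)).IsPath := by
    have h1 : (p'.concat hy.symm).reverse = Walk.cons hy p'.reverse := by
      rw [Walk.reverse_concat]
    have h2 : (Walk.cons hy p'.reverse).IsPath := by
      rw [Walk.cons_isPath_iff]
      refine ⟨hp'path.reverse, ?_⟩
      rw [Walk.support_reverse, List.mem_reverse]
      exact hmp'
    have := h2.reverse
    rwa [← h1, Walk.reverse_reverse] at this
  have hcyc : (Walk.cons hx (p'.concat hy.symm)).IsCycle := by
    rw [Walk.cons_isCycle_iff]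
    refine ⟨hq, ?_⟩
    intro hmem
    have : s(m, x) ∈ (p'.concat hy.symm).reverse.edges := by
      rw [Walk.edges_reverse, List.mem_reverse]; exact hmem
    rw [Walk.reverse_concat, Walk.edges_cons] at this
    rcases List.mem_cons.mp this with h | h
    · rw [Sym2.eq_iff] at h
      rcases h with ⟨_, h2⟩ | ⟨_, h2⟩
      · exact hxy h2
      · exact hx.ne h2.symm
    · have := Walk.fst_mem_support_of_mem_edges _ h
      rw [Walk.support_reverse, List.mem_reverse] at this
      exact hmp' this
  exact hH _ hcyc

/-- If `H - m` is acyclic and no two distinct neighbors of `m` are reachable in `H - m`,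
then `H` is acyclic. -/
lemma R6peel_back [DecidableEq V] {H : SimpleGraph V} {m : V}
    (h1 : (R6RS H {m}ᶜ).IsAcyclic)
    (h2 : ∀ x y, H.Adj m x → H.Adj m y → x ≠ y → ¬ (R6RS H {m}ᶜ).Reachable x y) :
    H.IsAcyclic := by
  intro u c hc
  by_cases hm : m ∈ c.support
  · have hc' : (c.rotate m hm).IsCycle := hc.rotate hm
    generalize c.rotate m hm = c' at hc'
    cases c' with
    | nil => exact hc'.ne_nil rfl
    | cons h q =>
      rename_i x
      rw [Walk.cons_isCycle_iff] at hc'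
      obtain ⟨hqpath, hqe⟩ := hc'
      have hrev := hqpath.reverse
      rcases hq : q.reverse with _ | ⟨hmy, q''⟩
      · exact h.ne rfl
      · rename_i y
        rw [hq, Walk.cons_isPath_iff] at hrev
        obtain ⟨hq''path, hmq''⟩ := hrev
        have hxy : x ≠ y := by
          rintro rfl
          apply hqe
          have : s(m, x) ∈ q.reverse.edges := by
            rw [hq, Walk.edges_cons]; exact List.mem_cons_self
          rwa [Walk.edges_reverse, List.mem_reverse] at this
        have hsup : ∀ z ∈ q''.support, z ≠ m := by
          intro z hz heq
          exact hmq'' (heq ▸ hz)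
        have hedges : ∀ e ∈ q''.edges, e ∈ (R6RS H {m}ᶜ).edgeSet := by
          intro e he
          induction e with
          | h z w =>
            refine ⟨q''.edges_subset_edgeSet he, ?_, ?_⟩
            · exact hsup z (Walk.fst_mem_support_of_mem_edges _ he)
            · exact hsup w (Walk.snd_mem_support_of_mem_edges _ he)
        exact h2 y x hmy h hxy.symm (q''.transfer _ hedges).reachable
  · have hsup : ∀ z ∈ c.support, z ≠ m := fun z hz h => hm (h ▸ hz)
    have hedges : ∀ e ∈ c.edges, e ∈ (R6RS H {m}ᶜ).edgeSet := by
      intro e he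
      induction e with
      | h z w =>
        refine ⟨c.edges_subset_edgeSet he, ?_, ?_⟩
        · exact hsup z (Walk.fst_mem_support_of_mem_edges _ he)
        · exact hsup w (Walk.snd_mem_support_of_mem_edges _ he)
    exact h1 _ (hc.transfer hedges)

lemma R6peelRS [DecidableEq V] {G : SimpleGraph V} {s : Set V} {m : V}
    (h1 : (R6RS G (s ∩ {m}ᶜ)).IsAcyclic)
    (h2 : ∀ x y, (R6RS G s).Adj m x → (R6RS G s).Adj m y → x ≠ y →
      ¬ (R6RS G (s ∩ {m}ᶜ)).Reachable x y) :
    (R6RS G s).IsAcyclic := by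
  apply R6peel_back (m := m)
  · rw [R6RS_RS]; exact h1
  · intro x y hx hy hne hre
    rw [R6RS_RS] at hre
    exact h2 x y hx hy hne hre

lemma R6keyRS [DecidableEq V] {G : SimpleGraph V} {s : Set V}
    (hs : (R6RS G s).IsAcyclic) {m x y : V}
    (hmx : (R6RS G s).Adj m x) (hmy : (R6RS G s).Adj m y) (hxy : x ≠ y)
    (hre : (R6RS G (s ∩ {m}ᶜ)).Reachable x y) : False :=
  R6peel_forward hs hmx hmy hxy (by rw [R6RS_RS]; exact hre)

/-- Homomorphism from a comap into the edge-restriction to the range. -/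
def R6Hom (G : SimpleGraph V) (f : W → V) : G.comap f →g R6RS G (Set.range f) where
  toFun := f
  map_rel' := fun h => ⟨h, ⟨_, rfl⟩, ⟨_, rfl⟩⟩

lemma R6lift_walk {G : SimpleGraph V} {f : W → V} (hf : Function.Injective f) :
    ∀ {x y : V} (p : (R6RS G (Set.range f)).Walk x y) (x₀ y₀ : W) (hx : f x₀ = x)
      (hy : f y₀ = y),
      ∃ q : (G.comap f).Walk x₀ y₀, q.map (R6Hom G f) = p.copy hx.symm hy.symm := by
  intro x y p
  induction p with
  | nil =>
    intro x₀ y₀ hx hy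
    have : y₀ = x₀ := hf (hy.trans hx.symm)
    subst this
    subst hx
    exact ⟨Walk.nil, rfl⟩
  | cons h q ih =>
    intro x₀ y₀ hx hy
    subst hy
    obtain ⟨z₀, hz⟩ := h.2.2
    obtain ⟨q', hq'⟩ := ih z₀ y₀ hz rfl
    subst hz; subst hx
    have hadj : (G.comap f).Adj x₀ z₀ := h.1
    refine ⟨Walk.cons hadj q', ?_⟩
    rw [Walk.map_cons, hq']
    rfl

lemma R6comap_acyclic {G : SimpleGraph V} {f : W → V} (hf : Function.Injective f) :
    (G.comap f).IsAcyclic ↔ (R6RS G (Set.range f)).IsAcyclic := by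
  have hinj : Function.Injective (R6Hom G f : (G.comap f) →g R6RS G (Set.range f)) := hf
  constructor
  · intro h u c hc
    have hu : u ∈ Set.range f := by
      cases c with
      | nil => exact (hc.ne_nil rfl).elim
      | cons h' q => exact h'.2.1
    obtain ⟨u₀, hu₀⟩ := hu
    obtain ⟨q, hq⟩ := R6lift_walk hf c u₀ u₀ hu₀ hu₀
    have : (q.map (R6Hom G f)).IsCycle := by
      rw [hq]
      exact (Walk.isCycle_copy _ _).mpr hc
    exact h q ((Walk.map_isCycle_iff_of_injective hinj).1 this)
  · intro h u c hc
    exact h _ (hc.map hinj)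

end R6Aux

section Interop

variable {V : Type*} [Fintype V]

lemma isFVS_iff_RS (G : SimpleGraph V) (X : Finset V) :
    IsFVS G X ↔ (R6RS G ((↑X : Set V)ᶜ)).IsAcyclic := by
  unfold IsFVS
  have h : (G.induce ((↑X : Set V)ᶜ)) = G.comap (Subtype.val) := rfl
  rw [h, R6comap_acyclic Subtype.val_injective, Subtype.range_val]

lemma isFVS_del_iff [DecidableEq V] (G : SimpleGraph V) (a : V)
    (X' : Finset {x : V // x ≠ a}) :
    IsFVS (delVert G a) X' ↔
      (R6RS G {z : V | z ∉ X'.image Subtype.val ∧ z ≠ a}).IsAcyclic := by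
  unfold IsFVS delVert
  have h : ((G.comap (Subtype.val : {x : V // x ≠ a} → V)).induce
        ((↑X' : Set {x : V // x ≠ a})ᶜ))
      = G.comap ((Subtype.val : {x : V // x ≠ a} → V) ∘
          (Subtype.val : ((↑X' : Set {x : V // x ≠ a})ᶜ : Set {x : V // x ≠ a}) →
            {x : V // x ≠ a})) := rfl
  rw [h, R6comap_acyclic
      (Subtype.val_injective.comp Subtype.val_injective)]
  rw [Set.range_comp, Subtype.range_val]
  have hs : (Subtype.val '' ((↑X' : Set {x : V // x ≠ a})ᶜ))
      = {z : V | z ∉ X'.image Subtype.val ∧ z ≠ a} := by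
    apply Set.ext
    intro z
    constructor
    · rintro ⟨⟨z', hz'a⟩, hz', rfl⟩
      refine ⟨?_, hz'a⟩
      intro hmem
      rw [Finset.mem_image] at hmem
      obtain ⟨w, hw, hwv⟩ := hmem
      have : w = ⟨z', hz'a⟩ := Subtype.val_injective hwv
      rw [this] at hw
      exact hz' hw
    · rintro ⟨h1, h2⟩
      refine ⟨⟨z, h2⟩, ?_, rfl⟩
      intro hmem
      exact h1 (Finset.mem_image.mpr ⟨⟨z, h2⟩, hmem, rfl⟩)
  rw [hs]

end Interop

/-- Safeness of rule (R6): given a clique `K = {v 0, …, v (q-1)}`, a vertex `r`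
outside `K`, and three pairwise non-adjacent leaves `a`, `b`, `c` attached at `r`
with nested prefix neighborhoods in `K`, the vertex `a` may be deleted. -/
theorem fvs_rule_R6 {V : Type*} [Fintype V] [DecidableEq V]
    (G : SimpleGraph V) (k q : ℕ)
    (v : Fin q → V) (hvinj : Function.Injective v)
    (hK : G.IsClique (Set.range v))
    (r a b c : V) (hr : r ∉ Set.range v)
    (habc : a ≠ b ∧ a ≠ c ∧ b ≠ c)
    (haK : a ∉ Set.range v) (hbK : b ∉ Set.range v) (hcK : c ∉ Set.range v)
    (har : a ≠ r) (hbr : b ≠ r) (hcr : c ≠ r)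
    (hnadj : ¬ G.Adj a b ∧ ¬ G.Adj a c ∧ ¬ G.Adj b c)
    (hra : G.Adj r a) (hrb : G.Adj r b) (hrc : G.Adj r c)
    (hNa : G.neighborSet a ⊆ insert r (Set.range v))
    (hNb : G.neighborSet b ⊆ insert r (Set.range v))
    (hNc : G.neighborSet c ⊆ insert r (Set.range v))
    (qa qb qc : ℕ) (h1 : 1 ≤ qa) (hab : qa ≤ qb) (hbc : qb ≤ qc) (hcq : qc ≤ q)
    (hpa : ∀ i : Fin q, G.Adj a (v i) ↔ (i : ℕ) < qa)
    (hpb : ∀ i : Fin q, G.Adj b (v i) ↔ (i : ℕ) < qb)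
    (hpc : ∀ i : Fin q, G.Adj c (v i) ↔ (i : ℕ) < qc) :
    HasFVS G k ↔ HasFVS (delVert G a) k := by
  obtain ⟨hab1, hac1, hbc1⟩ := habc
  obtain ⟨nab, nac, nbc⟩ := hnadj
  constructor
  · -- easy direction
    rintro ⟨X, hcard, hX⟩
    refine ⟨X.subtype (· ≠ a), ?_, ?_⟩
    · rw [Finset.card_subtype]
      exact le_trans (Finset.card_filter_le _ _) hcard
    · rw [isFVS_del_iff]
      apply R6acyclic_of_le (R6RS_mono ?_) ((isFVS_iff_RS G X).mp hX)
      rintro z ⟨h1, h2⟩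
      intro hz
      apply h1
      rw [Finset.mem_image]
      exact ⟨⟨z, h2⟩, Finset.mem_subtype.mpr hz, rfl⟩
  · rintro ⟨X', hX'card, hX'⟩
    rw [isFVS_del_iff] at hX'
    set X : Finset V := X'.image Subtype.val with hXdef
    have hXcard : X.card ≤ k := le_trans Finset.card_image_le hX'card
    have haX : a ∉ X := by
      rw [hXdef]
      intro h
      rw [Finset.mem_image] at h
      obtain ⟨w, _, hw⟩ := h
      exact w.2 hw
    set s₀ : Set V := {z : V | z ∉ X ∧ z ≠ a} with hs₀
    have hF : (R6RS G s₀).IsAcyclic := hX'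
    -- basic distinctness facts
    have hvne_a : ∀ i : Fin q, v i ≠ a := fun i h => haK ⟨i, h⟩
    have hvne_b : ∀ i : Fin q, v i ≠ b := fun i h => hbK ⟨i, h⟩
    have hvne_c : ∀ i : Fin q, v i ≠ c := fun i h => hcK ⟨i, h⟩
    have hvne_r : ∀ i : Fin q, v i ≠ r := fun i h => hr ⟨i, h⟩
    have hKadj : ∀ i j : Fin q, v i ≠ v j → G.Adj (v i) (v j) :=
      fun i j hne => hK ⟨i, rfl⟩ ⟨j, rfl⟩ hne
    have haNbr : ∀ x, G.Adj a x → x = r ∨ ∃ i : Fin q, x = v i ∧ (i : ℕ) < qa := by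
      intro x hx
      rcases Set.mem_insert_iff.mp (hNa hx) with h | hh
      · exact Or.inl h
      · obtain ⟨i, rfl⟩ := hh
        exact Or.inr ⟨i, rfl, (hpa i).mp hx⟩
    have hbNbr : ∀ x, G.Adj b x → x = r ∨ ∃ i : Fin q, x = v i ∧ (i : ℕ) < qb := by
      intro x hx
      rcases Set.mem_insert_iff.mp (hNb hx) with h | hh
      · exact Or.inl h
      · obtain ⟨i, rfl⟩ := hh
        exact Or.inr ⟨i, rfl, (hpb i).mp hx⟩
    have hcNbr : ∀ x, G.Adj c x → x = r ∨ ∃ i : Fin q, x = v i ∧ (i : ℕ) < qc := by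
      intro x hx
      rcases Set.mem_insert_iff.mp (hNc hx) with h | hh
      · exact Or.inl h
      · obtain ⟨i, rfl⟩ := hh
        exact Or.inr ⟨i, rfl, (hpc i).mp hx⟩
    have key : ∀ (m x y : V), m ∈ s₀ → x ∈ s₀ → y ∈ s₀ → G.Adj m x → G.Adj m y →
        x ≠ y → (R6RS G (s₀ ∩ {m}ᶜ)).Reachable x y → False := by
      intro m x y hm hx hy hmx hmy hne hre
      exact R6keyRS hF ⟨hmx, hm, hx⟩ ⟨hmy, hm, hy⟩ hne hre
    have tri : ∀ (m x y : V), m ∈ s₀ → x ∈ s₀ → y ∈ s₀ → G.Adj m x → G.Adj m y →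
        G.Adj x y → x ≠ m → y ≠ m → False := by
      intro m x y hm hx hy h1' h2' hxy hxm hym
      exact key m x y hm hx hy h1' h2' hxy.ne
        (Adj.reachable ⟨hxy, ⟨hx, hxm⟩, ⟨hy, hym⟩⟩)
    have hK2 : ∀ (i j l : Fin q), v i ∈ s₀ → v j ∈ s₀ → v l ∈ s₀ →
        v i ≠ v j → v i ≠ v l → v j ≠ v l → False := by
      intro i j l hi hj hl hij hil hjl
      exact tri (v l) (v i) (v j) hl hi hj (hKadj l i hil.symm) (hKadj l j hjl.symm)
        (hKadj i j hij) hil hjl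
    have hgen : ∀ (u w : V), ∀ z : V, z ∈ ((↑(insert w (X.erase u)) : Set V)ᶜ) ↔
        z ∈ {z : V | (z ∈ s₀ ∨ z = a ∨ z = u) ∧ z ≠ w} := by
      intro u w z
      simp only [Finset.coe_insert, Set.mem_compl_iff, Set.mem_insert_iff, Finset.mem_coe,
        Finset.mem_erase, Set.mem_setOf_eq]
      constructor
      · intro h
        push_neg at h
        obtain ⟨hzw, h2⟩ := h
        refine ⟨?_, hzw⟩
        by_cases hzu : z = u
        · exact Or.inr (Or.inr hzu)
        by_cases hza : z = a
        · exact Or.inr (Or.inl hza)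
        · exact Or.inl ⟨h2 hzu, hza⟩
      · rintro ⟨hz, hzw⟩
        push_neg
        refine ⟨hzw, ?_⟩
        intro hzu
        rcases hz with h | rfl | rfl
        exacts [h.1, haX, absurd rfl hzu]
    have hgen2 : ∀ (u w : V), u ≠ a → ∀ z : V,
        z ∈ ({z : V | (z ∈ s₀ ∨ z = a ∨ z = u) ∧ z ≠ w} ∩ {a}ᶜ) ↔
        z ∈ {z : V | (z ∈ s₀ ∨ z = u) ∧ z ≠ w} := by
      intro u w hua z
      constructor
      · rintro ⟨⟨hz, hzw⟩, hza⟩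
        refine ⟨?_, hzw⟩
        rcases hz with h | h | h
        exacts [Or.inl h, absurd h hza, Or.inr h]
      · rintro ⟨hz, hzw⟩
        have hza : z ≠ a := by
          rcases hz with h | rfl
          exacts [h.2, hua]
        refine ⟨⟨?_, hzw⟩, hza⟩
        rcases hz with h | h
        exacts [Or.inl h, Or.inr (Or.inr h)]
    have hgen3 : ∀ (u w : V), u ∈ X → ∀ z : V,
        z ∈ ({z : V | (z ∈ s₀ ∨ z = u) ∧ z ≠ w} ∩ {u}ᶜ) ↔
        z ∈ (s₀ ∩ {w}ᶜ) := by
      intro u w huX z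
      constructor
      · rintro ⟨⟨hz, hzw⟩, hzu⟩
        rcases hz with h | h
        · exact ⟨h, hzw⟩
        · exact absurd h hzu
      · rintro ⟨hzs, hzw⟩
        exact ⟨⟨Or.inl hzs, hzw⟩, fun h => hzs.1 (h ▸ huX)⟩
    have hsetX : R6RS G ((↑X : Set V)ᶜ) = R6RS G {z : V | z ∈ s₀ ∨ z = a} := by
      apply R6RS_congr
      intro z
      simp only [Set.mem_compl_iff, Finset.mem_coe, Set.mem_setOf_eq]
      constructor
      · intro h
        by_cases hza : z = a
        · exact Or.inr hza
        · exact Or.inl ⟨h, hza⟩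
      · rintro (h | rfl)
        · exact h.1
        · exact haX
    have hbase0 : (R6RS G ({z : V | z ∈ s₀ ∨ z = a} ∩ {a}ᶜ)).IsAcyclic := by
      apply R6acyclic_of_le (R6RS_mono ?_) hF
      rintro z ⟨hz, hza⟩
      rcases hz with h | rfl
      · exact h
      · exact absurd rfl hza
    have hXworks : (∀ x y : V, (R6RS G {z : V | z ∈ s₀ ∨ z = a}).Adj a x →
        (R6RS G {z : V | z ∈ s₀ ∨ z = a}).Adj a y → x ≠ y → False) → HasFVS G k := by
      intro hcond
      exact ⟨X, hXcard, (isFVS_iff_RS G X).mpr (by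
        rw [hsetX]
        exact R6peelRS hbase0 (fun x y hx hy hne _ => hcond x y hx hy hne))⟩
    by_cases hbX : b ∈ X
    · by_cases hcX : c ∈ X
      · -- CASE 1 : b, c ∈ X
        show ∃ Y : Finset V, Y.card ≤ k ∧ IsFVS G Y
        set T : Finset V := ((Finset.univ.filter (fun i : Fin q => (i : ℕ) < qc)).image v).filter
            (fun z => z ∉ X) with hT
        have hTmem : ∀ z : V, z ∈ T ↔ (∃ i : Fin q, (i : ℕ) < qc ∧ v i = z) ∧ z ∉ X := by
          intro z
          rw [hT]
          simp only [Finset.mem_filter, Finset.mem_image, Finset.mem_univ, true_and]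
        have hvT : ∀ i : Fin q, (i : ℕ) < qc → v i ∉ X → v i ∈ T :=
          fun i hi hiX => (hTmem _).mpr ⟨⟨i, hi, rfl⟩, hiX⟩
        have hTcard : T.card ≤ 2 := by
          by_contra hh
          push_neg at hh
          obtain ⟨z₁, z₂, z₃, hz₁, hz₂, hz₃, h12, h13, h23⟩ := Finset.two_lt_card_iff.mp hh
          obtain ⟨⟨i₁, _, rfl⟩, hx1⟩ := (hTmem z₁).mp hz₁
          obtain ⟨⟨i₂, _, rfl⟩, hx2⟩ := (hTmem z₂).mp hz₂
          obtain ⟨⟨i₃, _, rfl⟩, hx3⟩ := (hTmem z₃).mp hz₃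
          exact hK2 i₁ i₂ i₃ ⟨hx1, hvne_a i₁⟩ ⟨hx2, hvne_a i₂⟩ ⟨hx3, hvne_a i₃⟩ h12 h13 h23
        have hbcX : 2 ≤ X.card := by
          have hsub : ({b, c} : Finset V) ⊆ X := by
            intro z hz
            rcases Finset.mem_insert.mp hz with rfl | hz
            · exact hbX
            · rw [Finset.mem_singleton] at hz
              exact hz ▸ hcX
          have hcardle := Finset.card_le_card hsub
          rwa [Finset.card_insert_of_notMem (by rw [Finset.mem_singleton]; exact hbc1),
            Finset.card_singleton] at hcardle
        refine ⟨((X.erase b).erase c) ∪ T, ?_, (isFVS_iff_RS _ _).mpr ?_⟩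
        · have e1 : (X.erase b).card = X.card - 1 := Finset.card_erase_of_mem hbX
          have e2 : ((X.erase b).erase c).card = (X.erase b).card - 1 :=
            Finset.card_erase_of_mem (Finset.mem_erase.mpr ⟨Ne.symm hbc1, hcX⟩)
          have e3 := Finset.card_union_le ((X.erase b).erase c) T
          omega
        · have hset : ∀ z : V, z ∈ ((↑(((X.erase b).erase c) ∪ T) : Set V)ᶜ) ↔
              z ∈ {z : V | (z ∈ s₀ ∨ z = a ∨ z = b ∨ z = c) ∧ z ∉ T} := by
            intro z
            simp only [Finset.coe_union, Set.mem_compl_iff, Set.mem_union, Finset.mem_coe,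
              Finset.mem_erase, Set.mem_setOf_eq]
            constructor
            · intro h
              push_neg at h
              obtain ⟨h1, h2⟩ := h
              refine ⟨?_, h2⟩
              by_cases hzb : z = b
              · exact Or.inr (Or.inr (Or.inl hzb))
              by_cases hzc : z = c
              · exact Or.inr (Or.inr (Or.inr hzc))
              by_cases hza : z = a
              · exact Or.inr (Or.inl hza)
              · exact Or.inl ⟨h1 hzc hzb, hza⟩
            · rintro ⟨hz, hzT⟩
              push_neg
              refine ⟨?_, hzT⟩
              intro hzc hzb
              rcases hz with h | rfl | rfl | rfl
              exacts [h.1, haX, absurd rfl hzb, absurd rfl hzc]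
          have hsA : ∀ z : V,
              z ∈ ({z : V | (z ∈ s₀ ∨ z = a ∨ z = b ∨ z = c) ∧ z ∉ T} ∩ {a}ᶜ) ↔
              z ∈ {z : V | (z ∈ s₀ ∨ z = b ∨ z = c) ∧ z ∉ T} := by
            intro z
            constructor
            · rintro ⟨⟨hz, hzT⟩, hza⟩
              refine ⟨?_, hzT⟩
              rcases hz with h | h | h | h
              exacts [Or.inl h, absurd h hza, Or.inr (Or.inl h), Or.inr (Or.inr h)]
            · rintro ⟨hz, hzT⟩
              have hza : z ≠ a := by
                rcases hz with h | rfl | rfl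
                exacts [h.2, Ne.symm hab1, Ne.symm hac1]
              refine ⟨⟨?_, hzT⟩, hza⟩
              rcases hz with h | h | h
              exacts [Or.inl h, Or.inr (Or.inr (Or.inl h)), Or.inr (Or.inr (Or.inr h))]
          have hsB : ∀ z : V,
              z ∈ ({z : V | (z ∈ s₀ ∨ z = b ∨ z = c) ∧ z ∉ T} ∩ {b}ᶜ) ↔
              z ∈ {z : V | (z ∈ s₀ ∨ z = c) ∧ z ∉ T} := by
            intro z
            constructor
            · rintro ⟨⟨hz, hzT⟩, hzb⟩
              refine ⟨?_, hzT⟩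
              rcases hz with h | h | h
              exacts [Or.inl h, absurd h hzb, Or.inr h]
            · rintro ⟨hz, hzT⟩
              have hzb : z ≠ b := by
                rcases hz with h | rfl
                · exact fun hzb => h.1 (hzb ▸ hbX)
                · exact Ne.symm hbc1
              refine ⟨⟨?_, hzT⟩, hzb⟩
              rcases hz with h | h
              exacts [Or.inl h, Or.inr (Or.inr h)]
          have hsC : ∀ z : V,
              z ∈ ({z : V | (z ∈ s₀ ∨ z = c) ∧ z ∉ T} ∩ {c}ᶜ) ↔
              z ∈ {z : V | z ∈ s₀ ∧ z ∉ T} := by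
            intro z
            constructor
            · rintro ⟨⟨hz, hzT⟩, hzc⟩
              rcases hz with h | h
              · exact ⟨h, hzT⟩
              · exact absurd h hzc
            · rintro ⟨hz, hzT⟩
              exact ⟨⟨Or.inl hz, hzT⟩, fun h => hz.1 (h ▸ hcX)⟩
          rw [R6RS_congr hset]
          apply R6peelRS (m := a)
          · rw [R6RS_congr hsA]
            apply R6peelRS (m := b)
            · rw [R6RS_congr hsB]
              apply R6peelRS (m := c)
              · rw [R6RS_congr hsC]
                exact R6acyclic_of_le (R6RS_mono (fun z hz => hz.1)) hF
              · intro x y hx hy hne hre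
                exfalso
                have hcl : ∀ w', (R6RS G {z : V | (z ∈ s₀ ∨ z = c) ∧ z ∉ T}).Adj c w' →
                    w' = r := by
                  intro w' hw
                  rcases hcNbr w' hw.1 with rfl | ⟨l, rfl, hl⟩
                  · rfl
                  · exfalso
                    have hls : v l ∈ s₀ := by
                      rcases hw.2.2.1 with h | h
                      · exact h
                      · exact absurd h (hvne_c l)
                    exact hw.2.2.2 (hvT l hl hls.1)
                exact hne ((hcl x hx).trans (hcl y hy).symm)
            · intro x y hx hy hne hre
              exfalso
              have hcl : ∀ w', (R6RS G {z : V | (z ∈ s₀ ∨ z = b ∨ z = c) ∧ z ∉ T}).Adj b w' →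
                  w' = r := by
                intro w' hw
                rcases hbNbr w' hw.1 with rfl | ⟨l, rfl, hl⟩
                · rfl
                · exfalso
                  have hls : v l ∈ s₀ := by
                    rcases hw.2.2.1 with h | h | h
                    · exact h
                    · exact absurd h (hvne_b l)
                    · exact absurd h (hvne_c l)
                  exact hw.2.2.2 (hvT l (lt_of_lt_of_le hl hbc) hls.1)
              exact hne ((hcl x hx).trans (hcl y hy).symm)
          · intro x y hx hy hne hre
            exfalso
            have hcl : ∀ w',
                (R6RS G {z : V | (z ∈ s₀ ∨ z = a ∨ z = b ∨ z = c) ∧ z ∉ T}).Adj a w' →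
                w' = r := by
              intro w' hw
              rcases haNbr w' hw.1 with rfl | ⟨l, rfl, hl⟩
              · rfl
              · exfalso
                have hls : v l ∈ s₀ := by
                  rcases hw.2.2.1 with h | h | h | h
                  · exact h
                  · exact absurd h (hvne_a l)
                  · exact absurd h (hvne_b l)
                  · exact absurd h (hvne_c l)
                exact hw.2.2.2 (hvT l (lt_of_lt_of_le hl (le_trans hab hbc)) hls.1)
            exact hne ((hcl x hx).trans (hcl y hy).symm)
      · -- CASE 2 : b ∈ X, c ∉ X
        have hcs : c ∈ s₀ := ⟨hcX, Ne.symm hac1⟩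
        by_cases hA : ∃ i : Fin q, (i : ℕ) < qa ∧ v i ∈ s₀
        · obtain ⟨i₁, hi₁, hv₁s⟩ := hA
          have hi₁c : (i₁ : ℕ) < qc := lt_of_lt_of_le hi₁ (le_trans hab hbc)
          have hCsub : ∀ j : Fin q, (j : ℕ) < qc → v j ∈ s₀ → v j = v i₁ := by
            intro j hj hjs
            by_contra hne
            exact tri c (v j) (v i₁) hcs hjs hv₁s ((hpc j).mpr hj) ((hpc i₁).mpr hi₁c)
              (hKadj j i₁ hne) (hvne_c j) (hvne_c i₁)
          show ∃ Y : Finset V, Y.card ≤ k ∧ IsFVS G Y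
          refine ⟨insert r (X.erase b), ?_, (isFVS_iff_RS _ _).mpr ?_⟩
          · have h0 : 0 < X.card := Finset.card_pos.mpr ⟨b, hbX⟩
            have e1 := Finset.card_insert_le r (X.erase b)
            rw [Finset.card_erase_of_mem hbX] at e1
            omega
          · rw [R6RS_congr (hgen b r)]
            apply R6peelRS (m := a)
            · rw [R6RS_congr (hgen2 b r (Ne.symm hab1))]
              apply R6peelRS (m := b)
              · rw [R6RS_congr (hgen3 b r hbX)]
                exact R6acyclic_of_le (R6RS_mono (fun z hz => hz.1)) hF
              · intro x y hx hy hne hre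
                exfalso
                have hcl : ∀ w', (R6RS G {z : V | (z ∈ s₀ ∨ z = b) ∧ z ≠ r}).Adj b w' →
                    w' = v i₁ := by
                  intro w' hw
                  rcases hbNbr w' hw.1 with rfl | ⟨l, rfl, hl⟩
                  · exact absurd rfl hw.2.2.2
                  · have hls : v l ∈ s₀ := by
                      rcases hw.2.2.1 with h | h
                      · exact h
                      · exact absurd h (hvne_b l)
                    exact hCsub l (lt_of_lt_of_le hl hbc) hls
                exact hne ((hcl x hx).trans (hcl y hy).symm)
            · intro x y hx hy hne hre
              exfalso
              have hcl : ∀ w', (R6RS G {z : V | (z ∈ s₀ ∨ z = a ∨ z = b) ∧ z ≠ r}).Adj a w' →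
                  w' = v i₁ := by
                intro w' hw
                rcases haNbr w' hw.1 with rfl | ⟨l, rfl, hl⟩
                · exact absurd rfl hw.2.2.2
                · have hls : v l ∈ s₀ := by
                    rcases hw.2.2.1 with h | h | h
                    · exact h
                    · exact absurd h (hvne_a l)
                    · exact absurd h (hvne_b l)
                  exact hCsub l (lt_of_lt_of_le hl (le_trans hab hbc)) hls
              exact hne ((hcl x hx).trans (hcl y hy).symm)
        · apply hXworks
          intro x y hx hy hne
          have hcl : ∀ w', (R6RS G {z : V | z ∈ s₀ ∨ z = a}).Adj a w' → w' = r := by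
            intro w' hw
            rcases haNbr w' hw.1 with rfl | ⟨l, rfl, hl⟩
            · rfl
            · exfalso
              apply hA
              refine ⟨l, hl, ?_⟩
              rcases hw.2.2 with h | h
              · exact h
              · exact absurd h (hvne_a l)
          exact hne ((hcl x hx).trans (hcl y hy).symm)
    · by_cases hcX : c ∈ X
      · -- CASE 3 : b ∉ X, c ∈ X
        have hbs : b ∈ s₀ := ⟨hbX, Ne.symm hab1⟩
        by_cases hA : ∃ i : Fin q, (i : ℕ) < qa ∧ v i ∈ s₀
        · obtain ⟨i₁, hi₁, hv₁s⟩ := hA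
          have hi₁b : (i₁ : ℕ) < qb := lt_of_lt_of_le hi₁ hab
          have hBsub : ∀ j : Fin q, (j : ℕ) < qb → v j ∈ s₀ → v j = v i₁ := by
            intro j hj hjs
            by_contra hne
            exact tri b (v j) (v i₁) hbs hjs hv₁s ((hpb j).mpr hj) ((hpb i₁).mpr hi₁b)
              (hKadj j i₁ hne) (hvne_b j) (hvne_b i₁)
          by_cases hW : ∃ j : Fin q, (j : ℕ) < qc ∧ v j ∈ s₀ ∧ v j ≠ v i₁
          · obtain ⟨j₀, hj₀, hws, hwne⟩ := hW
            have hCpair : ∀ l : Fin q, (l : ℕ) < qc → v l ∈ s₀ → v l = v i₁ ∨ v l = v j₀ := by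
              intro l hl hls
              by_contra hcon
              push_neg at hcon
              exact hK2 l i₁ j₀ hls hv₁s hws hcon.1 hcon.2 (fun h => hwne h.symm)
            show ∃ Y : Finset V, Y.card ≤ k ∧ IsFVS G Y
            refine ⟨insert (v i₁) (X.erase c), ?_, (isFVS_iff_RS _ _).mpr ?_⟩
            · have h0 : 0 < X.card := Finset.card_pos.mpr ⟨c, hcX⟩
              have e1 := Finset.card_insert_le (v i₁) (X.erase c)
              rw [Finset.card_erase_of_mem hcX] at e1
              omega
            · rw [R6RS_congr (hgen c (v i₁))]
              apply R6peelRS (m := a)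
              · rw [R6RS_congr (hgen2 c (v i₁) (Ne.symm hac1))]
                apply R6peelRS (m := c)
                · rw [R6RS_congr (hgen3 c (v i₁) hcX)]
                  exact R6acyclic_of_le (R6RS_mono (fun z hz => hz.1)) hF
                · intro x y hx hy hne hre
                  rw [R6RS_congr (hgen3 c (v i₁) hcX)] at hre
                  have hcl : ∀ w', (R6RS G {z : V | (z ∈ s₀ ∨ z = c) ∧ z ≠ v i₁}).Adj c w' →
                      (w' = r ∧ r ∈ s₀) ∨ w' = v j₀ := by
                    intro w' hw
                    rcases hcNbr w' hw.1 with rfl | ⟨l, rfl, hl⟩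
                    · left
                      refine ⟨rfl, ?_⟩
                      rcases hw.2.2.1 with h | h
                      · exact h
                      · exact absurd h (Ne.symm hcr)
                    · right
                      have hls : v l ∈ s₀ := by
                        rcases hw.2.2.1 with h | h
                        · exact h
                        · exact absurd h (hvne_c l)
                      rcases hCpair l hl hls with h | h
                      · exact absurd h hw.2.2.2
                      · exact h
                  have hmain : r ∈ s₀ → (R6RS G (s₀ ∩ {v i₁}ᶜ)).Reachable r (v j₀) → False := by
                    intro hrs hre'
                    apply key (v i₁) b (v j₀) hv₁s hbs hws ((hpb i₁).mpr hi₁b).symm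
                      (hKadj i₁ j₀ (fun h => hwne h.symm)) (fun h => hbK ⟨j₀, h.symm⟩)
                    exact (Adj.reachable (show (R6RS G (s₀ ∩ {v i₁}ᶜ)).Adj b r from
                      ⟨hrb.symm, ⟨hbs, fun h => hbK ⟨i₁, h.symm⟩⟩,
                       ⟨hrs, fun h => hr ⟨i₁, h.symm⟩⟩⟩)).trans hre'
                  rcases hcl x hx with ⟨rfl, hrs⟩ | rfl <;> rcases hcl y hy with ⟨h', hrs'⟩ | rfl
                  · exact hne h'.symm
                  · exact hmain hrs hre
                  · subst h'
                    exact hmain hrs' hre.symm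
                  · exact hne rfl
              · intro x y hx hy hne hre
                exfalso
                have hcl : ∀ w',
                    (R6RS G {z : V | (z ∈ s₀ ∨ z = a ∨ z = c) ∧ z ≠ v i₁}).Adj a w' →
                    w' = r := by
                  intro w' hw
                  rcases haNbr w' hw.1 with rfl | ⟨l, rfl, hl⟩
                  · rfl
                  · exfalso
                    have hls : v l ∈ s₀ := by
                      rcases hw.2.2.1 with h | h | h
                      · exact h
                      · exact absurd h (hvne_a l)
                      · exact absurd h (hvne_c l)
                    exact hw.2.2.2 (hBsub l (lt_of_lt_of_le hl hab) hls)
                exact hne ((hcl x hx).trans (hcl y hy).symm)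
          · -- no second clique survivor
            push_neg at hW
            show ∃ Y : Finset V, Y.card ≤ k ∧ IsFVS G Y
            refine ⟨insert r (X.erase c), ?_, (isFVS_iff_RS _ _).mpr ?_⟩
            · have h0 : 0 < X.card := Finset.card_pos.mpr ⟨c, hcX⟩
              have e1 := Finset.card_insert_le r (X.erase c)
              rw [Finset.card_erase_of_mem hcX] at e1
              omega
            · rw [R6RS_congr (hgen c r)]
              apply R6peelRS (m := a)
              · rw [R6RS_congr (hgen2 c r (Ne.symm hac1))]
                apply R6peelRS (m := c)
                · rw [R6RS_congr (hgen3 c r hcX)]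
                  exact R6acyclic_of_le (R6RS_mono (fun z hz => hz.1)) hF
                · intro x y hx hy hne hre
                  exfalso
                  have hcl : ∀ w', (R6RS G {z : V | (z ∈ s₀ ∨ z = c) ∧ z ≠ r}).Adj c w' →
                      w' = v i₁ := by
                    intro w' hw
                    rcases hcNbr w' hw.1 with rfl | ⟨l, rfl, hl⟩
                    · exact absurd rfl hw.2.2.2
                    · have hls : v l ∈ s₀ := by
                        rcases hw.2.2.1 with h | h
                        · exact h
                        · exact absurd h (hvne_c l)
                      exact hW l hl hls
                  exact hne ((hcl x hx).trans (hcl y hy).symm)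
              · intro x y hx hy hne hre
                exfalso
                have hcl : ∀ w',
                    (R6RS G {z : V | (z ∈ s₀ ∨ z = a ∨ z = c) ∧ z ≠ r}).Adj a w' →
                    w' = v i₁ := by
                  intro w' hw
                  rcases haNbr w' hw.1 with rfl | ⟨l, rfl, hl⟩
                  · exact absurd rfl hw.2.2.2
                  · have hls : v l ∈ s₀ := by
                      rcases hw.2.2.1 with h | h | h
                      · exact h
                      · exact absurd h (hvne_a l)
                      · exact absurd h (hvne_c l)
                    exact hBsub l (lt_of_lt_of_le hl hab) hls
                exact hne ((hcl x hx).trans (hcl y hy).symm)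
        · apply hXworks
          intro x y hx hy hne
          have hcl : ∀ w', (R6RS G {z : V | z ∈ s₀ ∨ z = a}).Adj a w' → w' = r := by
            intro w' hw
            rcases haNbr w' hw.1 with rfl | ⟨l, rfl, hl⟩
            · rfl
            · exfalso
              apply hA
              refine ⟨l, hl, ?_⟩
              rcases hw.2.2 with h | h
              · exact h
              · exact absurd h (hvne_a l)
          exact hne ((hcl x hx).trans (hcl y hy).symm)
      · -- CASE 4 : b, c ∉ X
        have hbs : b ∈ s₀ := ⟨hbX, Ne.symm hab1⟩
        have hcs : c ∈ s₀ := ⟨hcX, Ne.symm hac1⟩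
        apply hXworks
        intro x y hx hy hne
        have hclass : ∀ w', (R6RS G {z : V | z ∈ s₀ ∨ z = a}).Adj a w' →
            (w' = r ∧ r ∈ s₀) ∨ ∃ l : Fin q, w' = v l ∧ (l : ℕ) < qa ∧ v l ∈ s₀ := by
          intro w' hw
          rcases haNbr w' hw.1 with rfl | ⟨l, rfl, hl⟩
          · left
            refine ⟨rfl, ?_⟩
            rcases hw.2.2 with h | h
            · exact h
            · exact absurd h (Ne.symm har)
          · right
            refine ⟨l, rfl, hl, ?_⟩
            rcases hw.2.2 with h | h
            · exact h
            · exact absurd h (hvne_a l)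
        have hmain : ∀ l : Fin q, (l : ℕ) < qa → v l ∈ s₀ → r ∈ s₀ → False := by
          intro l hl hls hrs
          apply key b r (v l) hbs hrs hls hrb.symm ((hpb l).mpr (lt_of_lt_of_le hl hab))
            (fun h => hr ⟨l, h.symm⟩)
          exact (Adj.reachable (show (R6RS G (s₀ ∩ {b}ᶜ)).Adj r c from
              ⟨hrc, ⟨hrs, Ne.symm hbr⟩, ⟨hcs, Ne.symm hbc1⟩⟩)).trans
            (Adj.reachable (show (R6RS G (s₀ ∩ {b}ᶜ)).Adj c (v l) from
              ⟨(hpc l).mpr (lt_of_lt_of_le hl (le_trans hab hbc)),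
               ⟨hcs, Ne.symm hbc1⟩, ⟨hls, hvne_b l⟩⟩))
        rcases hclass x hx with ⟨rfl, hrs⟩ | ⟨l, rfl, hl, hls⟩
        · rcases hclass y hy with ⟨rfl, _⟩ | ⟨l, rfl, hl, hls⟩
          · exact hne rfl
          · exact hmain l hl hls hrs
        · rcases hclass y hy with ⟨rfl, hrs⟩ | ⟨l', rfl, hl', hls'⟩
          · exact hmain l hl hls hrs
          · exact tri c (v l) (v l') hcs hls hls'
              ((hpc l).mpr (lt_of_lt_of_le hl (le_trans hab hbc)))
              ((hpc l').mpr (lt_of_lt_of_le hl' (le_trans hab hbc)))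
              (hKadj l l' hne) (hvne_c l) (hvne_c l')
end
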